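/- arXiv:2006.14272 — 9 statements merged into one kernel-verified Lean document; each statement's English description precedes it below -/
import Mathlib

section
/- Let H : C → ℝ be a map. Then H is a premium principle on C if and only if there exist a risk measure R : B_b → ℝ and a deviation measure D : C → ℝ such that H(X) = R(X) + D(X) for all X ∈ C. -/
open MeasureTheory

/-- The set of bounded measurable functions `Ω → ℝ`. -/
def Bb (Ω : Type*) [MeasurableSpace Ω] : Set (Ω → ℝ) :=
  {X | Measurable X ∧ ∃ c : ℝ, ∀ ω, |X ω| ≤ c}

/-- `H` is a premium principle on `C`: (P1) cash additivity and
(P2) `H 0 = 0` and nonnegativity on nonnegative claims. -/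
def IsPremium {Ω : Type*} (C : Set (Ω → ℝ)) (H : (Ω → ℝ) → ℝ) : Prop :=
  (∀ X ∈ C, ∀ m : ℝ, H (fun ω => X ω + m) = H X + m) ∧
  H (fun _ => 0) = 0 ∧
  ∀ X ∈ C, (∀ ω, 0 ≤ X ω) → 0 ≤ H X

/-- `R` is a (monetary) risk measure on `B_b`. -/
def IsRisk {Ω : Type*} [MeasurableSpace Ω] (R : (Ω → ℝ) → ℝ) : Prop :=
  (∀ X ∈ Bb Ω, ∀ m : ℝ, R (fun ω => X ω + m) = R X + m) ∧
  R (fun _ => 0) = 0 ∧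
  ∀ X ∈ Bb Ω, ∀ Y ∈ Bb Ω, (∀ ω, X ω ≤ Y ω) → R X ≤ R Y

/-- `D` is a deviation measure on `C`. -/
def IsDeviation {Ω : Type*} (C : Set (Ω → ℝ)) (D : (Ω → ℝ) → ℝ) : Prop :=
  (∀ X ∈ C, ∀ m : ℝ, D (fun ω => X ω + m) = D X) ∧
  D (fun _ => 0) = 0 ∧
  ∀ X ∈ C, 0 ≤ D X

/-- The maximal risk measure `R_Max(X) = inf {H X₀ | X₀ ∈ C, X₀ ≥ X}`. -/
noncomputable def RMax {Ω : Type*} (C : Set (Ω → ℝ)) (H : (Ω → ℝ) → ℝ) (X : Ω → ℝ) : ℝ :=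
  sInf {y | ∃ X₀ ∈ C, (∀ ω, X ω ≤ X₀ ω) ∧ H X₀ = y}

/-- The minimal deviation measure `D_Min = H - R_Max`. -/
noncomputable def DMin {Ω : Type*} (C : Set (Ω → ℝ)) (H : (Ω → ℝ) → ℝ) (X : Ω → ℝ) : ℝ :=
  H X - RMax C H X

/-- A normalized positive linear functional on `B_b` (a finitely additive probability). -/
def IsNPLF {Ω : Type*} [MeasurableSpace Ω] (μ : (Ω → ℝ) → ℝ) : Prop :=
  (∀ X ∈ Bb Ω, ∀ Y ∈ Bb Ω, μ (fun ω => X ω + Y ω) = μ X + μ Y) ∧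
  (∀ X ∈ Bb Ω, ∀ c : ℝ, μ (fun ω => c * X ω) = c * μ X) ∧
  (∀ X ∈ Bb Ω, (∀ ω, 0 ≤ X ω) → 0 ≤ μ X) ∧
  μ (fun _ => 1) = 1

/-- The convex dual `H*(μ) = sup_{X ∈ C} (μ X - H X)`, valued in `EReal`. -/
noncomputable def Hstar {Ω : Type*} (C : Set (Ω → ℝ)) (H : (Ω → ℝ) → ℝ)
    (μ : (Ω → ℝ) → ℝ) : EReal :=
  ⨆ X ∈ C, ((μ X - H X : ℝ) : EReal)

/-- `H` is convex on `C`. -/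
def IsConvexOn {Ω : Type*} (C : Set (Ω → ℝ)) (H : (Ω → ℝ) → ℝ) : Prop :=
  ∀ X ∈ C, ∀ Y ∈ C, ∀ l : ℝ, 0 ≤ l → l ≤ 1 →
    H (fun ω => l * X ω + (1 - l) * Y ω) ≤ l * H X + (1 - l) * H Y

/-- `H` is a premium principle on `C` iff it is the sum of a risk
measure on `B_b` and a deviation measure on `C`. -/
theorem premium_iff_sum_risk_deviation {Ω : Type*} [MeasurableSpace Ω]
    (C : Set (Ω → ℝ)) (H : (Ω → ℝ) → ℝ)
    (hCB : C ⊆ Bb Ω) (h0C : (fun _ => (0 : ℝ)) ∈ C)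
    (hshift : ∀ X ∈ C, ∀ m : ℝ, (fun ω => X ω + m) ∈ C) :
    IsPremium C H ↔
      ∃ R D : (Ω → ℝ) → ℝ, IsRisk R ∧ IsDeviation C D ∧ ∀ X ∈ C, H X = R X + D X := by
  have h0Bb : (fun _ => (0 : ℝ)) ∈ Bb Ω := ⟨measurable_const, 0, fun ω => by simp⟩
  constructor
  · rintro ⟨hP1, hP0, hP2⟩
    by_cases hne : Nonempty Ω
    · -- helper facts
      have hbdd : ∀ X ∈ Bb Ω, BddBelow (Set.range X) := by
        rintro X ⟨-, c, hc⟩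
        exact ⟨-c, by rintro y ⟨ω, rfl⟩; linarith [(abs_le.1 (hc ω)).1]⟩
      have hbddm : ∀ (X : Ω → ℝ), BddBelow (Set.range X) → ∀ m : ℝ,
          BddBelow (Set.range fun ω => X ω + m) := by
        rintro X ⟨b, hb⟩ m
        refine ⟨b + m, ?_⟩
        rintro y ⟨ω, rfl⟩
        exact add_le_add (hb (Set.mem_range_self ω)) le_rfl
      have hshiftInf : ∀ X ∈ Bb Ω, ∀ m : ℝ,
          sInf (Set.range fun ω => X ω + m) = sInf (Set.range X) + m := by
        intro X hX m
        have hb := hbdd X hX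
        have hb' := hbddm X hb m
        apply le_antisymm
        · have h1 : ∀ ω, sInf (Set.range fun ω => X ω + m) - m ≤ X ω := by
            intro ω
            have := csInf_le hb' (Set.mem_range_self (f := fun ω => X ω + m) ω)
            linarith
          have := le_csInf (Set.range_nonempty X) (by rintro y ⟨ω, rfl⟩; exact h1 ω)
          linarith
        · refine le_csInf (Set.range_nonempty _) ?_
          rintro y ⟨ω, rfl⟩
          exact add_le_add (csInf_le hb (Set.mem_range_self ω)) le_rfl
      refine ⟨fun X => sInf (Set.range X), fun X => H X - sInf (Set.range X), ?_, ?_, ?_⟩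
      · refine ⟨fun X hX m => hshiftInf X hX m, ?_, ?_⟩
        · simp [Set.range_const]
        · intro X hX Y hY hXY
          refine le_csInf (Set.range_nonempty Y) ?_
          rintro y ⟨ω, rfl⟩
          exact (csInf_le (hbdd X hX) (Set.mem_range_self ω)).trans (hXY ω)
      · refine ⟨?_, ?_, ?_⟩
        · intro X hX m
          show H (fun ω => X ω + m) - sInf (Set.range fun ω => X ω + m)
              = H X - sInf (Set.range X)
          rw [hP1 X hX m, hshiftInf X (hCB hX) m]; ring
        · simp [hP0, Set.range_const]
        · intro X hX
          set m := sInf (Set.range X) with hm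
          have hge : ∀ ω, 0 ≤ X ω + -m := by
            intro ω
            have := csInf_le (hbdd X (hCB hX)) (Set.mem_range_self ω)
            linarith
          have := hP2 _ (hshift X hX (-m)) hge
          rw [hP1 X hX (-m)] at this
          show 0 ≤ H X - sInf (Set.range X)
          rw [← hm]; linarith
      · intro X _; ring
    · exfalso
      have h1 : (fun ω : Ω => (fun _ : Ω => (0:ℝ)) ω + 1) = (fun _ : Ω => (0:ℝ)) := by
        funext ω; exact absurd ⟨ω⟩ hne
      have := hP1 _ h0C 1
      rw [h1, hP0] at this
      linarith
  · rintro ⟨R, D, ⟨hR1, hR0, hRmono⟩, ⟨hD1, hD0, hD2⟩, hsum⟩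
    refine ⟨?_, ?_, ?_⟩
    · intro X hX m
      rw [hsum _ (hshift X hX m), hR1 X (hCB hX) m, hD1 X hX m, hsum X hX]; ring
    · rw [hsum _ h0C, hR0, hD0]; ring
    · intro X hX hXpos
      have h1 : R (fun _ => (0:ℝ)) ≤ R X := hRmono _ h0Bb X (hCB hX) hXpos
      rw [hR0] at h1
      have := hD2 X hX
      rw [hsum X hX]; linarith
end

section
/- Let H : C → ℝ be a premium principle and define R_Max(X) := inf{H(X₀) : X₀ ∈ C, X₀ ≥ X} for X ∈ B_b. Then: (a) R_Max is a well-defined (real-valued) risk measure on B_b; (b) R_Max(X) ≤ H(X) for all X ∈ C; (c) D_Min(X) := H(X) − R_Max(X) defines a deviation measure on C, so that H(X) = R_Max(X) + D_Min(X) for all X ∈ C; (d) for every other decomposition H(X) = R(X) + D(X) for all X ∈ C with a risk measure R : B_b → ℝ and a deviation measure D : C → ℝ, one has R(X) ≤ R_Max(X) for all X ∈ B_b and D(X) ≥ D_Min(X) for all X ∈ C. -/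
open MeasureTheory

/-- the maximal decomposition of a premium principle into the
maximal risk measure `R_Max` and the minimal deviation measure `D_Min`. -/
theorem maximal_decomposition {Ω : Type*} [MeasurableSpace Ω]
    (C : Set (Ω → ℝ)) (H : (Ω → ℝ) → ℝ)
    (hCB : C ⊆ Bb Ω) (h0C : (fun _ => (0 : ℝ)) ∈ C)
    (hshift : ∀ X ∈ C, ∀ m : ℝ, (fun ω => X ω + m) ∈ C)
    (hH : IsPremium C H) :
    -- (a) `R_Max` is a well-defined (real-valued) risk measure on `B_b`
    (∀ X ∈ Bb Ω, ({y | ∃ X₀ ∈ C, (∀ ω, X ω ≤ X₀ ω) ∧ H X₀ = y}).Nonempty ∧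
      BddBelow {y | ∃ X₀ ∈ C, (∀ ω, X ω ≤ X₀ ω) ∧ H X₀ = y}) ∧
    IsRisk (RMax C H) ∧
    -- (b) `R_Max ≤ H` on `C`
    (∀ X ∈ C, RMax C H X ≤ H X) ∧
    -- (c) `D_Min` is a deviation measure on `C` and `H = R_Max + D_Min`
    IsDeviation C (DMin C H) ∧
    (∀ X ∈ C, H X = RMax C H X + DMin C H X) ∧
    -- (d) maximality/minimality of the decomposition
    (∀ R D : (Ω → ℝ) → ℝ, IsRisk R → IsDeviation C D →
      (∀ X ∈ C, H X = R X + D X) →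
      (∀ X ∈ Bb Ω, R X ≤ RMax C H X) ∧ (∀ X ∈ C, DMin C H X ≤ D X)) := by
  obtain ⟨hP1, hP0, hP2⟩ := hH
  set S : (Ω → ℝ) → Set ℝ :=
    fun X => {y | ∃ X₀ ∈ C, (∀ ω, X ω ≤ X₀ ω) ∧ H X₀ = y} with hS
  -- constants are in C with H value m
  have hconst : ∀ m : ℝ, (fun _ : Ω => m) ∈ C ∧ H (fun _ => m) = m := by
    intro m
    have he : (fun ω : Ω => (0 : ℝ) + m) = fun _ => m := by funext ω; simp
    have h1 := hshift _ h0C m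
    have h2 := hP1 _ h0C m
    rw [he] at h1 h2
    exact ⟨h1, by rw [h2, hP0]; ring⟩
  -- (a) wellposedness
  have key : ∀ X ∈ Bb Ω, (S X).Nonempty ∧ BddBelow (S X) := by
    rintro X ⟨hXm, c, hc⟩
    refine ⟨⟨H (fun _ => c), fun _ => c, (hconst c).1,
      fun ω => (abs_le.mp (hc ω)).2, rfl⟩, ⟨-c, ?_⟩⟩
    rintro y ⟨X₀, hX₀C, hge, rfl⟩
    have h1 : ∀ ω, 0 ≤ X₀ ω + c := fun ω => by
      have := (abs_le.mp (hc ω)).1; linarith [hge ω]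
    have h2 := hP2 _ (hshift _ hX₀C c) h1
    have h3 := hP1 _ hX₀C c
    rw [h3] at h2
    linarith
  have hRdef : ∀ Y, RMax C H Y = sInf (S Y) := fun Y => rfl
  -- membership lemma : H X ∈ S X for X ∈ C
  have hmem : ∀ X ∈ C, H X ∈ S X := fun X hX => ⟨X, hX, fun ω => le_rfl, rfl⟩
  -- (b)
  have hb : ∀ X ∈ C, RMax C H X ≤ H X := fun X hX =>
    csInf_le (key X (hCB hX)).2 (hmem X hX)
  -- shift property of RMax
  have hBbshift : ∀ X ∈ Bb Ω, ∀ m : ℝ, (fun ω => X ω + m) ∈ Bb Ω := by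
    rintro X ⟨hXm, c, hc⟩ m
    exact ⟨hXm.add_const m, c + |m|, fun ω =>
      (abs_add_le _ _).trans (add_le_add (hc ω) le_rfl)⟩
  have hRshift : ∀ X ∈ Bb Ω, ∀ m : ℝ,
      RMax C H (fun ω => X ω + m) = RMax C H X + m := by
    intro X hX m
    have hXm := hBbshift X hX m
    rw [hRdef, hRdef]
    apply le_antisymm
    · have h : sInf (S (fun ω => X ω + m)) - m ≤ sInf (S X) := by
        apply le_csInf (key X hX).1
        rintro y ⟨X₀, hX₀C, hge, rfl⟩
        have hmem2 : H X₀ + m ∈ S (fun ω => X ω + m) :=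
          ⟨fun ω => X₀ ω + m, hshift _ hX₀C m,
            fun ω => add_le_add (hge ω) le_rfl, hP1 _ hX₀C m⟩
        have := csInf_le (key _ hXm).2 hmem2
        linarith
      linarith
    · apply le_csInf (key _ hXm).1
      rintro y ⟨X₀, hX₀C, hge, rfl⟩
      have hmem2 : H X₀ - m ∈ S X := by
        refine ⟨fun ω => X₀ ω + (-m), hshift _ hX₀C (-m),
          fun ω => by have h := hge ω; dsimp only at h ⊢; linarith, ?_⟩
        rw [hP1 _ hX₀C (-m)]; ring
      have := csInf_le (key X hX).2 hmem2
      linarith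
  -- RMax 0 = 0
  have hR0 : RMax C H (fun _ => 0) = 0 := by
    have h0B : (fun _ : Ω => (0 : ℝ)) ∈ Bb Ω := hCB h0C
    apply le_antisymm
    · have := hb _ h0C; rwa [hP0] at this
    · apply le_csInf (key _ h0B).1
      rintro y ⟨X₀, hX₀C, hge, rfl⟩
      exact hP2 _ hX₀C hge
  -- monotonicity
  have hRmono : ∀ X ∈ Bb Ω, ∀ Y ∈ Bb Ω, (∀ ω, X ω ≤ Y ω) →
      RMax C H X ≤ RMax C H Y := by
    intro X hX Y hY hle
    apply csInf_le_csInf (key X hX).2 (key Y hY).1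
    rintro y ⟨X₀, hX₀C, hge, rfl⟩
    exact ⟨X₀, hX₀C, fun ω => (hle ω).trans (hge ω), rfl⟩
  have hRisk : IsRisk (RMax C H) := ⟨hRshift, hR0, hRmono⟩
  refine ⟨key, hRisk, hb, ⟨?_, ?_, ?_⟩, ?_, ?_⟩
  · -- DMin shift
    intro X hX m
    unfold DMin
    rw [hP1 _ hX m, hRshift X (hCB hX) m]; ring
  · unfold DMin; rw [hP0, hR0]; ring
  · intro X hX
    have := hb X hX
    unfold DMin; linarith
  · intro X hX; unfold DMin; ring
  · -- (d)
    intro R D hR hD hdec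
    obtain ⟨hR1, hR0', hRmono'⟩ := hR
    obtain ⟨hD1, hD0, hDpos⟩ := hD
    have hRle : ∀ X ∈ Bb Ω, R X ≤ RMax C H X := by
      intro X hX
      apply le_csInf (key X hX).1
      rintro y ⟨X₀, hX₀C, hge, rfl⟩
      have h1 : R X ≤ R X₀ := hRmono' X hX X₀ (hCB hX₀C) hge
      have h2 := hdec X₀ hX₀C
      have h3 := hDpos X₀ hX₀C
      linarith
    refine ⟨hRle, fun X hX => ?_⟩
    have h1 := hRle X (hCB hX)
    have h2 := hdec X hX
    unfold DMin; linarith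
end

section
/- Let H : C → ℝ be a premium principle. Then the following are equivalent: (i) H is monotone, i.e. H(X) ≤ H(Y) for all X, Y ∈ C with X ≤ Y pointwise; (ii) H(X) = R_Max(X) for all X ∈ C; (iii) D_Min(X) = 0 for all X ∈ C. -/
open MeasureTheory

/-- a premium principle is monotone iff it coincides with its
maximal risk measure on `C`, iff its minimal deviation measure vanishes. -/
theorem monotone_iff_eq_RMax_iff_DMin_zero {Ω : Type*} [MeasurableSpace Ω]
    (C : Set (Ω → ℝ)) (H : (Ω → ℝ) → ℝ)
    (hCB : C ⊆ Bb Ω) (h0C : (fun _ => (0 : ℝ)) ∈ C)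
    (hshift : ∀ X ∈ C, ∀ m : ℝ, (fun ω => X ω + m) ∈ C)
    (hH : IsPremium C H) :
    ((∀ X ∈ C, ∀ Y ∈ C, (∀ ω, X ω ≤ Y ω) → H X ≤ H Y) ↔
      (∀ X ∈ C, H X = RMax C H X)) ∧
    ((∀ X ∈ C, ∀ Y ∈ C, (∀ ω, X ω ≤ Y ω) → H X ≤ H Y) ↔
      (∀ X ∈ C, DMin C H X = 0)) := by
  obtain ⟨hP1, hP0, hP2⟩ := hH
  have hbdd : ∀ X ∈ C, BddBelow {y | ∃ X₀ ∈ C, (∀ ω, X ω ≤ X₀ ω) ∧ H X₀ = y} := by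
    intro X hX
    obtain ⟨_, c, hc⟩ := hCB hX
    refine ⟨-c, ?_⟩
    rintro y ⟨X₀, hX₀, hle, rfl⟩
    have hnn : ∀ ω, 0 ≤ X₀ ω + c := by
      intro ω
      have := (abs_le.mp (hc ω)).1
      linarith [hle ω]
    have := hP2 _ (hshift X₀ hX₀ c) hnn
    rw [hP1 X₀ hX₀ c] at this
    linarith
  have hRle : ∀ X ∈ C, RMax C H X ≤ H X := by
    intro X hX
    exact csInf_le (hbdd X hX) ⟨X, hX, fun ω => le_refl _, rfl⟩
  have key : (∀ X ∈ C, ∀ Y ∈ C, (∀ ω, X ω ≤ Y ω) → H X ≤ H Y) ↔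
      (∀ X ∈ C, H X = RMax C H X) := by
    constructor
    · intro hmono X hX
      refine le_antisymm ?_ (hRle X hX)
      refine le_csInf ⟨H X, X, hX, fun ω => le_refl _, rfl⟩ ?_
      rintro y ⟨X₀, hX₀, hle, rfl⟩
      exact hmono X hX X₀ hX₀ hle
    · intro heq X hX Y hY hle
      calc H X = RMax C H X := heq X hX
        _ ≤ H Y := csInf_le (hbdd X hX) ⟨Y, hY, hle, rfl⟩
  refine ⟨key, key.trans ?_⟩
  constructor
  · intro h X hX; simp [DMin, ← h X hX]
  · intro h X hX
    have := h X hX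
    unfold DMin at this
    linarith
end

section
/- Let (Ω, 𝓕, P) be a probability space, let 0 ≤ θ ≤ 1/2, and define H(X) := E_P(X) + θ·E_P(|X − E_P(X)|) for every bounded measurable X : Ω → ℝ. Then H(X) ≤ (1 − 2θ)·E_P(X) ≤ 0 for every bounded measurable X with X ≤ 0 pointwise, and H is monotone: H(X) ≤ H(Y) for all bounded measurable X, Y with X ≤ Y pointwise. -/
open MeasureTheory

/-- The mean absolute deviation premium principle
`H(X) = E_P(X) + θ · E_P(|X − E_P(X)|)`. -/
noncomputable def Hmad {Ω : Type*} [MeasurableSpace Ω] (P : Measure Ω) (θ : ℝ)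
    (X : Ω → ℝ) : ℝ :=
  (∫ ω, X ω ∂P) + θ * ∫ ω, |X ω - ∫ ω', X ω' ∂P| ∂P


lemma Bb.integrable {Ω : Type*} [MeasurableSpace Ω] {P : Measure Ω} [IsProbabilityMeasure P]
    {X : Ω → ℝ} (hX : X ∈ Bb Ω) : Integrable X P := by
  obtain ⟨hm, c, hc⟩ := hX
  exact ⟨hm.aestronglyMeasurable,
    MeasureTheory.HasFiniteIntegral.of_bounded (C := c) (Filter.Eventually.of_forall hc)⟩

lemma Bb.integrable_abs_sub {Ω : Type*} [MeasurableSpace Ω] {P : Measure Ω}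
    [IsProbabilityMeasure P] {X : Ω → ℝ} (hX : X ∈ Bb Ω) (m : ℝ) :
    Integrable (fun ω => |X ω - m|) P := by
  obtain ⟨hm, c, hc⟩ := hX
  refine ⟨((hm.sub measurable_const).abs).aestronglyMeasurable,
    MeasureTheory.HasFiniteIntegral.of_bounded (C := c + |m|)
      (Filter.Eventually.of_forall fun ω => ?_)⟩
  simp only [Real.norm_eq_abs, abs_abs]
  calc |X ω - m| ≤ |X ω| + |m| := abs_sub _ _
    _ ≤ c + |m| := by linarith [hc ω]

/-- for `0 ≤ θ ≤ 1/2` the mean absolute deviation premium principle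
satisfies `H(X) ≤ (1 − 2θ)·E_P(X) ≤ 0` for bounded measurable `X ≤ 0`, and is
monotone on bounded measurable functions. -/
theorem mad_premium_monotone {Ω : Type*} [MeasurableSpace Ω]
    (P : Measure Ω) [IsProbabilityMeasure P] (θ : ℝ) (hθ0 : 0 ≤ θ) (hθ1 : θ ≤ 1 / 2) :
    (∀ X ∈ Bb Ω, (∀ ω, X ω ≤ 0) →
      Hmad P θ X ≤ (1 - 2 * θ) * ∫ ω, X ω ∂P ∧ (1 - 2 * θ) * (∫ ω, X ω ∂P) ≤ 0) ∧
    (∀ X ∈ Bb Ω, ∀ Y ∈ Bb Ω, (∀ ω, X ω ≤ Y ω) → Hmad P θ X ≤ Hmad P θ Y) := by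
  constructor
  · intro X hX hXle
    have hXi := Bb.integrable (P:=P) hX
    set m := ∫ ω, X ω ∂P with hm
    have hmle : m ≤ 0 := integral_nonpos hXle
    have habs : ∫ ω, |X ω - m| ∂P ≤ -2 * m := by
      have hnegi : Integrable (fun ω => -X ω) P := hXi.neg
      have : ∫ ω, |X ω - m| ∂P ≤ ∫ ω, (-X ω - m) ∂P := by
        refine integral_mono (Bb.integrable_abs_sub (P:=P) hX m) (hnegi.sub (integrable_const m))
          fun ω => ?_
        have h1 := hXle ω
        rw [abs_sub_le_iff]; constructor <;> linarith
      rw [integral_sub hnegi (integrable_const m), integral_neg, integral_const,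
        probReal_univ, smul_eq_mul, one_mul] at this
      rw [hm] at this ⊢
      linarith
    constructor
    · have : θ * ∫ ω, |X ω - m| ∂P ≤ θ * (-2 * m) := by
        exact mul_le_mul_of_nonneg_left habs hθ0
      simp only [Hmad, ← hm]
      nlinarith
    · nlinarith
  · intro X hX Y hY hle
    have hXi := Bb.integrable (P:=P) hX
    have hYi := Bb.integrable (P:=P) hY
    set mX := ∫ ω, X ω ∂P with hmX
    set mY := ∫ ω, Y ω ∂P with hmY
    have hmle : mX ≤ mY := integral_mono hXi hYi hle
    have key : ∫ ω, |X ω - mX| ∂P ≤ (∫ ω, |Y ω - mY| ∂P) + 2 * (mY - mX) := by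
      have hpt : ∀ ω, |X ω - mX| ≤ |Y ω - mY| + ((Y ω - X ω) + (mY - mX)) := by
        intro ω
        have h1 := hle ω
        have h2 : |X ω - mX| ≤ |Y ω - mY| + |(X ω - mX) - (Y ω - mY)| := by
          have := abs_sub_abs_le_abs_sub (X ω - mX) (Y ω - mY)
          linarith [abs_nonneg ((X ω - mX) - (Y ω - mY))]
        have h3 : |(X ω - mX) - (Y ω - mY)| ≤ (Y ω - X ω) + (mY - mX) := by
          rw [abs_sub_le_iff]; constructor <;> linarith
        linarith
      have hsubi : Integrable (fun ω => Y ω - X ω) P := hYi.sub hXi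
      have haddi : Integrable (fun ω => (Y ω - X ω) + (mY - mX)) P :=
        hsubi.add (integrable_const _)
      have hInt : ∫ ω, |X ω - mX| ∂P ≤
          ∫ ω, (|Y ω - mY| + ((Y ω - X ω) + (mY - mX))) ∂P := by
        refine integral_mono (Bb.integrable_abs_sub (P:=P) hX mX)
          ((Bb.integrable_abs_sub (P:=P) hY mY).add haddi) hpt
      rw [integral_add (Bb.integrable_abs_sub (P:=P) hY mY) haddi,
        integral_add hsubi (integrable_const _), integral_sub hYi hXi,
        integral_const, probReal_univ, smul_eq_mul, one_mul,
        ← hmX, ← hmY] at hInt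
      linarith
    simp only [Hmad, ← hmX, ← hmY]
    nlinarith [mul_le_mul_of_nonneg_left key hθ0]
end

section
/- Let C be a linear subspace of B_b containing the constant functions and let H : C → ℝ be a convex premium principle. Then for every X ∈ B_b there exists a normalized positive linear functional μ on B_b with R_Max(X) = μ(X) − H*(μ), and R_Max(X) = max over all normalized positive linear functionals μ of μ(X) − H*(μ). Moreover, H*(μ) = sup_{X ∈ B_b} (μ(X) − R_Max(X)) for every normalized positive linear functional μ on B_b. -/
open MeasureTheory

set_option linter.unusedSectionVars false
set_option linter.unusedVariables false

namespace CDRAux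


variable {Ω : Type*} [MeasurableSpace Ω]

lemma mem_Bb_add {X Y : Ω → ℝ} (hX : X ∈ Bb Ω) (hY : Y ∈ Bb Ω) :
    (fun ω => X ω + Y ω) ∈ Bb Ω := by
  obtain ⟨hXm, cX, hcX⟩ := hX
  obtain ⟨hYm, cY, hcY⟩ := hY
  exact ⟨hXm.add hYm, cX + cY, fun ω => (abs_add_le _ _).trans (add_le_add (hcX ω) (hcY ω))⟩

lemma mem_Bb_smul {X : Ω → ℝ} (hX : X ∈ Bb Ω) (c : ℝ) :
    (fun ω => c * X ω) ∈ Bb Ω := by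
  obtain ⟨hXm, cX, hcX⟩ := hX
  refine ⟨hXm.const_mul c, |c| * cX, fun ω => ?_⟩
  rw [abs_mul]
  exact mul_le_mul_of_nonneg_left (hcX ω) (abs_nonneg c)

lemma mem_Bb_const (m : ℝ) : (fun _ : Ω => m) ∈ Bb Ω :=
  ⟨measurable_const, |m|, fun _ => le_refl _⟩

/-- `Bb Ω` as a submodule of `Ω → ℝ`. -/
def BbSub (Ω : Type*) [MeasurableSpace Ω] : Submodule ℝ (Ω → ℝ) where
  carrier := Bb Ω
  add_mem' := fun hX hY => mem_Bb_add hX hY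
  zero_mem' := mem_Bb_const 0
  smul_mem' := fun c _ hX => mem_Bb_smul hX c



variable {Ω : Type*} [MeasurableSpace Ω]
variable {C : Set (Ω → ℝ)} {H : (Ω → ℝ) → ℝ}

/-- The defining set for `RMax`. -/
def RSet (C : Set (Ω → ℝ)) (H : (Ω → ℝ) → ℝ) (X : Ω → ℝ) : Set ℝ :=
  {y | ∃ X₀ ∈ C, (∀ ω, X ω ≤ X₀ ω) ∧ H X₀ = y}

lemma RMax_eq (X : Ω → ℝ) : RMax C H X = sInf (RSet C H X) := rfl

lemma RSet_nonempty (hconst : ∀ m : ℝ, (fun _ => m) ∈ C) {X : Ω → ℝ} (hX : X ∈ Bb Ω) :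
    (RSet C H X).Nonempty := by
  obtain ⟨-, c, hc⟩ := hX
  exact ⟨H (fun _ => c), (fun _ => c), hconst c, fun ω => (abs_le.mp (hc ω)).2, rfl⟩

lemma RSet_lb (haddC : ∀ X ∈ C, ∀ Y ∈ C, (fun ω => X ω + Y ω) ∈ C)
    (hconst : ∀ m : ℝ, (fun _ => m) ∈ C) (hH : IsPremium C H)
    {X : Ω → ℝ} {m : ℝ} (hm : ∀ ω, m ≤ X ω) :
    ∀ y ∈ RSet C H X, m ≤ y := by
  rintro y ⟨X₀, hX₀C, hge, rfl⟩
  have h1C : (fun ω => X₀ ω + (fun _ : Ω => -m) ω) ∈ C := haddC X₀ hX₀C _ (hconst (-m))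
  have h0 : 0 ≤ H (fun ω => X₀ ω + (fun _ : Ω => -m) ω) :=
    hH.2.2 _ h1C (fun ω => by have := hm ω; have := hge ω; simp only; linarith)
  have h2 := hH.1 _ h1C m
  have h3 : (fun ω => (fun ω => X₀ ω + (fun _ : Ω => -m) ω) ω + m) = X₀ := by
    funext ω; simp
  rw [h3] at h2
  linarith

lemma RSet_bddBelow (haddC : ∀ X ∈ C, ∀ Y ∈ C, (fun ω => X ω + Y ω) ∈ C)
    (hconst : ∀ m : ℝ, (fun _ => m) ∈ C) (hH : IsPremium C H)
    {X : Ω → ℝ} (hX : X ∈ Bb Ω) : BddBelow (RSet C H X) := by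
  obtain ⟨-, c, hc⟩ := hX
  exact ⟨-c, fun y hy => RSet_lb haddC hconst hH (fun ω => (abs_le.mp (hc ω)).1) y hy⟩

lemma RMax_le (haddC : ∀ X ∈ C, ∀ Y ∈ C, (fun ω => X ω + Y ω) ∈ C)
    (hconst : ∀ m : ℝ, (fun _ => m) ∈ C) (hH : IsPremium C H)
    {X X₀ : Ω → ℝ} (hX : X ∈ Bb Ω) (hX₀ : X₀ ∈ C) (hge : ∀ ω, X ω ≤ X₀ ω) :
    RMax C H X ≤ H X₀ :=
  csInf_le (RSet_bddBelow haddC hconst hH hX) ⟨X₀, hX₀, hge, rfl⟩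

lemma le_RMax (hconst : ∀ m : ℝ, (fun _ => m) ∈ C)
    {X : Ω → ℝ} (hX : X ∈ Bb Ω) {b : ℝ}
    (h : ∀ X₀ ∈ C, (∀ ω, X ω ≤ X₀ ω) → b ≤ H X₀) :
    b ≤ RMax C H X :=
  le_csInf (RSet_nonempty hconst hX) (by rintro y ⟨X₀, hX₀C, hge, rfl⟩; exact h X₀ hX₀C hge)

lemma RMax_lb (hconst : ∀ m : ℝ, (fun _ => m) ∈ C)
    (haddC : ∀ X ∈ C, ∀ Y ∈ C, (fun ω => X ω + Y ω) ∈ C) (hH : IsPremium C H)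
    {X : Ω → ℝ} {m : ℝ} (hm : ∀ ω, m ≤ X ω) (hX : X ∈ Bb Ω) :
    m ≤ RMax C H X :=
  le_csInf (RSet_nonempty hconst hX) (RSet_lb haddC hconst hH hm)

lemma RMax_mono (hconst : ∀ m : ℝ, (fun _ => m) ∈ C)
    (haddC : ∀ X ∈ C, ∀ Y ∈ C, (fun ω => X ω + Y ω) ∈ C) (hH : IsPremium C H)
    {X Y : Ω → ℝ} (hX : X ∈ Bb Ω) (hY : Y ∈ Bb Ω) (hle : ∀ ω, X ω ≤ Y ω) :
    RMax C H X ≤ RMax C H Y :=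
  le_RMax hconst hY (fun X₀ hX₀C hge =>
    RMax_le haddC hconst hH hX hX₀C (fun ω => (hle ω).trans (hge ω)))

lemma RMax_add_const_le (hconst : ∀ m : ℝ, (fun _ => m) ∈ C)
    (haddC : ∀ X ∈ C, ∀ Y ∈ C, (fun ω => X ω + Y ω) ∈ C) (hH : IsPremium C H)
    {X : Ω → ℝ} (hX : X ∈ Bb Ω) (m : ℝ) :
    RMax C H (fun ω => X ω + m) ≤ RMax C H X + m := by
  have h := le_RMax (H := H) hconst hX (b := RMax C H (fun ω => X ω + m) - m) ?_
  · linarith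
  · intro X₀ hX₀C hge
    have h1C : (fun ω => X₀ ω + (fun _ : Ω => m) ω) ∈ C := haddC X₀ hX₀C _ (hconst m)
    have h2 : RMax C H (fun ω => X ω + m) ≤ H (fun ω => X₀ ω + (fun _ : Ω => m) ω) :=
      RMax_le haddC hconst hH (mem_Bb_add hX (mem_Bb_const m)) h1C
        (fun ω => by simp only; linarith [hge ω])
    have h3 := hH.1 X₀ hX₀C m
    simp only at h2 h3
    rw [h3] at h2
    linarith

lemma RMax_add_const (hconst : ∀ m : ℝ, (fun _ => m) ∈ C)
    (haddC : ∀ X ∈ C, ∀ Y ∈ C, (fun ω => X ω + Y ω) ∈ C) (hH : IsPremium C H)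
    {X : Ω → ℝ} (hX : X ∈ Bb Ω) (m : ℝ) :
    RMax C H (fun ω => X ω + m) = RMax C H X + m := by
  refine le_antisymm (RMax_add_const_le hconst haddC hH hX m) ?_
  have h := RMax_add_const_le hconst haddC hH (mem_Bb_add hX (mem_Bb_const m)) (-m)
  have h2 : (fun ω => (fun ω => X ω + (fun _ : Ω => m) ω) ω + -m) = X := by funext ω; simp
  simp only at h h2
  rw [h2] at h
  linarith

lemma RMax_le_H (hCB : C ⊆ Bb Ω) (hconst : ∀ m : ℝ, (fun _ => m) ∈ C)
    (haddC : ∀ X ∈ C, ∀ Y ∈ C, (fun ω => X ω + Y ω) ∈ C) (hH : IsPremium C H)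
    {X : Ω → ℝ} (hX : X ∈ C) : RMax C H X ≤ H X :=
  RMax_le haddC hconst hH (hCB hX) hX (fun _ => le_refl _)

end CDRAux

namespace CDRAux
section
variable {Ω : Type*} [MeasurableSpace Ω]
variable {C : Set (Ω → ℝ)} {H : (Ω → ℝ) → ℝ}

lemma le_add_mul_sInf {S : Set ℝ} (hne : S.Nonempty) (hbdd : BddBelow S)
    {t c d : ℝ} (ht : 0 ≤ t) (h : ∀ b ∈ S, c ≤ d + t * b) : c ≤ d + t * sInf S := by
  rcases ht.eq_or_lt with h0 | h0
  · obtain ⟨b, hb⟩ := hne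
    have hb' := h b hb
    rw [← h0] at hb' ⊢
    simpa using hb'
  · have h1 : (c - d) / t ≤ sInf S :=
      le_csInf hne fun b hb => by
        rw [div_le_iff₀ h0]
        have := h b hb; linarith
    have h2 : t * ((c - d) / t) ≤ t * sInf S := mul_le_mul_of_nonneg_left h1 h0.le
    rw [mul_div_cancel₀ _ h0.ne'] at h2
    linarith

lemma RMax_convex (hconst : ∀ m : ℝ, (fun _ => m) ∈ C)
    (haddC : ∀ X ∈ C, ∀ Y ∈ C, (fun ω => X ω + Y ω) ∈ C)
    (hsmulC : ∀ X ∈ C, ∀ c : ℝ, (fun ω => c * X ω) ∈ C)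
    (hH : IsPremium C H) (hconv : IsConvexOn C H)
    {X Y : Ω → ℝ} (hX : X ∈ Bb Ω) (hY : Y ∈ Bb Ω) {l : ℝ} (h0 : 0 ≤ l) (h1 : l ≤ 1) :
    RMax C H (fun ω => l * X ω + (1 - l) * Y ω) ≤
      l * RMax C H X + (1 - l) * RMax C H Y := by
  have hcomb : (fun ω => l * X ω + (1 - l) * Y ω) ∈ Bb Ω :=
    mem_Bb_add (mem_Bb_smul hX l) (mem_Bb_smul hY (1 - l))
  have key : ∀ X₀ ∈ C, (∀ ω, X ω ≤ X₀ ω) → ∀ Y₀ ∈ C, (∀ ω, Y ω ≤ Y₀ ω) →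
      RMax C H (fun ω => l * X ω + (1 - l) * Y ω) ≤ l * H X₀ + (1 - l) * H Y₀ := by
    intro X₀ hX₀ hgeX Y₀ hY₀ hgeY
    have hZ : (fun ω => l * X₀ ω + (1 - l) * Y₀ ω) ∈ C :=
      haddC _ (hsmulC X₀ hX₀ l) _ (hsmulC Y₀ hY₀ (1 - l))
    have hle : RMax C H (fun ω => l * X ω + (1 - l) * Y ω) ≤
        H (fun ω => l * X₀ ω + (1 - l) * Y₀ ω) :=
      RMax_le haddC hconst hH hcomb hZ (fun ω => by
        have h2 := hgeX ω; have h3 := hgeY ω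
        show l * X ω + (1 - l) * Y ω ≤ l * X₀ ω + (1 - l) * Y₀ ω
        have h4 : l * X ω ≤ l * X₀ ω := mul_le_mul_of_nonneg_left h2 h0
        have h5 : (1 - l) * Y ω ≤ (1 - l) * Y₀ ω :=
          mul_le_mul_of_nonneg_left h3 (by linarith)
        linarith)
    exact hle.trans (hconv X₀ hX₀ Y₀ hY₀ l h0 h1)
  have step1 : ∀ X₀ ∈ C, (∀ ω, X ω ≤ X₀ ω) →
      RMax C H (fun ω => l * X ω + (1 - l) * Y ω) ≤ l * H X₀ + (1 - l) * RMax C H Y := by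
    intro X₀ hX₀ hgeX
    have := le_add_mul_sInf (RSet_nonempty hconst hY)
      (RSet_bddBelow haddC hconst hH hY) (t := 1 - l)
      (c := RMax C H (fun ω => l * X ω + (1 - l) * Y ω)) (d := l * H X₀)
      (by linarith) ?_
    · exact this
    · rintro b ⟨Y₀, hY₀, hgeY, rfl⟩
      exact key X₀ hX₀ hgeX Y₀ hY₀ hgeY
  have step2 := le_add_mul_sInf (RSet_nonempty hconst hX)
    (RSet_bddBelow haddC hconst hH hX) (t := l)
    (c := RMax C H (fun ω => l * X ω + (1 - l) * Y ω)) (d := (1 - l) * RMax C H Y)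
    h0 ?_
  · rw [← RMax_eq X] at step2; linarith
  · rintro b ⟨X₀, hX₀, hgeX, rfl⟩
    have := step1 X₀ hX₀ hgeX
    linarith

section quot
variable (hconst : ∀ m : ℝ, (fun _ => m) ∈ C)
  (haddC : ∀ X ∈ C, ∀ Y ∈ C, (fun ω => X ω + Y ω) ∈ C)
  (hsmulC : ∀ X ∈ C, ∀ c : ℝ, (fun ω => c * X ω) ∈ C)
  (hH : IsPremium C H) (hconv : IsConvexOn C H)
include hconst haddC hsmulC hH hconv

lemma quot_mono {X V : Ω → ℝ} (hX : X ∈ Bb Ω) (hV : V ∈ Bb Ω)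
    {t s : ℝ} (ht : 0 < t) (hts : t ≤ s) :
    (RMax C H (fun ω => X ω + t * V ω) - RMax C H X) / t ≤
    (RMax C H (fun ω => X ω + s * V ω) - RMax C H X) / s := by
  have hs : 0 < s := ht.trans_le hts
  have hl0 : 0 ≤ t / s := by positivity
  have hl1 : t / s ≤ 1 := by rw [div_le_one hs]; exact hts
  have hc := RMax_convex hconst haddC hsmulC hH hconv
    (mem_Bb_add hX (mem_Bb_smul hV s)) hX hl0 hl1
  have he : (fun ω => t / s * (fun ω => X ω + s * V ω) ω + (1 - t / s) * X ω) =
      (fun ω => X ω + t * V ω) := by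
    funext ω; field_simp <;> ring
  rw [he] at hc
  have e2 : (t / s * RMax C H (fun ω => X ω + s * V ω) + (1 - t / s) * RMax C H X) * s =
      t * RMax C H (fun ω => X ω + s * V ω) + (s - t) * RMax C H X := by
    field_simp <;> ring
  have h2 := mul_le_mul_of_nonneg_right hc hs.le
  rw [e2] at h2
  rw [div_le_div_iff₀ ht hs]
  linarith

lemma quot_lb {X V : Ω → ℝ} (hX : X ∈ Bb Ω) (hV : V ∈ Bb Ω)
    {t s : ℝ} (ht : 0 < t) (hs : 0 < s) :
    (-(RMax C H (fun ω => X ω - s * V ω) - RMax C H X)) / s ≤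
    (RMax C H (fun ω => X ω + t * V ω) - RMax C H X) / t := by
  have hu : 0 < s + t := by linarith
  have hl0 : 0 ≤ s / (s + t) := by positivity
  have hl1 : s / (s + t) ≤ 1 := by rw [div_le_one hu]; linarith
  have hA : (fun ω => X ω + t * V ω) ∈ Bb Ω := mem_Bb_add hX (mem_Bb_smul hV t)
  have hB : (fun ω => X ω - s * V ω) ∈ Bb Ω := by
    have h := mem_Bb_add hX (mem_Bb_smul hV (-s))
    have e : (fun ω => X ω + (-s) * V ω) = (fun ω => X ω - s * V ω) := by
      funext ω; ring
    rw [← e]; exact h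
  have hc := RMax_convex hconst haddC hsmulC hH hconv hA hB hl0 hl1
  have he : (fun ω => s / (s + t) * (fun ω => X ω + t * V ω) ω +
      (1 - s / (s + t)) * (fun ω => X ω - s * V ω) ω) = X := by
    funext ω; field_simp <;> ring
  rw [he] at hc
  have key2 : RMax C H X * (s + t) ≤
      s * RMax C H (fun ω => X ω + t * V ω) + t * RMax C H (fun ω => X ω - s * V ω) := by
    have h := mul_le_mul_of_nonneg_right hc hu.le
    have e : (s / (s + t) * RMax C H (fun ω => X ω + t * V ω) +
        (1 - s / (s + t)) * RMax C H (fun ω => X ω - s * V ω)) * (s + t) =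
        s * RMax C H (fun ω => X ω + t * V ω) + t * RMax C H (fun ω => X ω - s * V ω) := by
      field_simp <;> ring
    rw [e] at h; linarith
  rw [div_le_div_iff₀ hs ht]
  nlinarith [key2]

lemma quot_half {X V W : Ω → ℝ} (hX : X ∈ Bb Ω) (hV : V ∈ Bb Ω) (hW : W ∈ Bb Ω)
    {t : ℝ} (ht : 0 < t) :
    (RMax C H (fun ω => X ω + t * (V ω + W ω)) - RMax C H X) / t ≤
    (RMax C H (fun ω => X ω + 2 * t * V ω) - RMax C H X) / (2 * t) +
    (RMax C H (fun ω => X ω + 2 * t * W ω) - RMax C H X) / (2 * t) := by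
  have h2t : 0 < 2 * t := by linarith
  have hA : (fun ω => X ω + 2 * t * V ω) ∈ Bb Ω := mem_Bb_add hX (mem_Bb_smul hV (2 * t))
  have hB : (fun ω => X ω + 2 * t * W ω) ∈ Bb Ω := mem_Bb_add hX (mem_Bb_smul hW (2 * t))
  have hc := RMax_convex hconst haddC hsmulC hH hconv hA hB
    (l := 1 / 2) (by norm_num) (by norm_num)
  have he : (fun ω => 1 / 2 * (fun ω => X ω + 2 * t * V ω) ω +
      (1 - 1 / 2) * (fun ω => X ω + 2 * t * W ω) ω) =
      (fun ω => X ω + t * (V ω + W ω)) := by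
    funext ω; ring
  rw [he] at hc
  rw [← add_div, div_le_div_iff₀ ht h2t]
  nlinarith [hc]

end quot
end
end CDRAux

namespace CDRAux
section
variable {Ω : Type*} [MeasurableSpace Ω]
variable {C : Set (Ω → ℝ)} {H : (Ω → ℝ) → ℝ}

lemma exists_subgrad (hCB : C ⊆ Bb Ω) (hconst : ∀ m : ℝ, (fun _ => m) ∈ C)
    (haddC : ∀ X ∈ C, ∀ Y ∈ C, (fun ω => X ω + Y ω) ∈ C)
    (hsmulC : ∀ X ∈ C, ∀ c : ℝ, (fun ω => c * X ω) ∈ C)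
    (hH : IsPremium C H) (hconv : IsConvexOn C H)
    {X : Ω → ℝ} (hX : X ∈ Bb Ω) :
    ∃ μ : (Ω → ℝ) → ℝ, IsNPLF μ ∧
      ∀ Y ∈ Bb Ω, μ Y - RMax C H Y ≤ μ X - RMax C H X := by
  classical
  let Q : BbSub Ω → Set ℝ := fun V =>
    {r | ∃ t : ℝ, 0 < t ∧
      (RMax C H (fun ω => X ω + t * (V : Ω → ℝ) ω) - RMax C H X) / t = r}
  let N : BbSub Ω → ℝ := fun V => sInf (Q V)
  have hQne : ∀ V : BbSub Ω, (Q V).Nonempty := fun V => ⟨_, 1, one_pos, rfl⟩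
  have hQbdd : ∀ V : BbSub Ω, BddBelow (Q V) := by
    intro V
    refine ⟨(-(RMax C H (fun ω => X ω - 1 * (V : Ω → ℝ) ω) - RMax C H X)) / 1, ?_⟩
    rintro r ⟨t, ht, rfl⟩
    exact quot_lb hconst haddC hsmulC hH hconv hX V.2 ht one_pos
  have hNle : ∀ (V : BbSub Ω) (t : ℝ), 0 < t →
      N V ≤ (RMax C H (fun ω => X ω + t * (V : Ω → ℝ) ω) - RMax C H X) / t :=
    fun V t ht => csInf_le (hQbdd V) ⟨t, ht, rfl⟩
  have hNp : ∀ V : BbSub Ω, N V ≤ RMax C H (fun ω => X ω + (V : Ω → ℝ) ω) - RMax C H X := by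
    intro V
    have h := hNle V 1 one_pos
    have e : (fun ω => X ω + 1 * (V : Ω → ℝ) ω) = fun ω => X ω + (V : Ω → ℝ) ω := by
      funext ω; ring
    rw [e, div_one] at h
    exact h
  -- positive homogeneity (one direction suffices)
  have hNhom_le : ∀ c : ℝ, 0 < c → ∀ V : BbSub Ω, N (c • V) ≤ c * N V := by
    intro c hc V
    have h1 : N (c • V) / c ≤ N V := by
      refine le_csInf (hQne V) ?_
      rintro r ⟨t, ht, rfl⟩
      have htc : 0 < t / c := by positivity
      have h2 := hNle (c • V) (t / c) htc
      have e : (fun ω => X ω + t / c * ((c • V : BbSub Ω) : Ω → ℝ) ω) =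
          (fun ω => X ω + t * (V : Ω → ℝ) ω) := by
        funext ω
        have hcoe : ((c • V : BbSub Ω) : Ω → ℝ) ω = c * (V : Ω → ℝ) ω := rfl
        rw [hcoe]
        field_simp
      rw [e] at h2
      set A := RMax C H (fun ω => X ω + t * (V : Ω → ℝ) ω) - RMax C H X with hA
      have e2 : A / (t / c) = A * c / t := by
        field_simp
      rw [e2] at h2
      have h3 : N (c • V) * t ≤ A * c := by
        have h4 := mul_le_mul_of_nonneg_right h2 ht.le
        rwa [div_mul_cancel₀ _ ht.ne'] at h4
      rw [div_le_div_iff₀ hc ht]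
      exact h3
    calc N (c • V) = c * (N (c • V) / c) := by field_simp
      _ ≤ c * N V := mul_le_mul_of_nonneg_left h1 hc.le
  have hNhom : ∀ c : ℝ, 0 < c → ∀ V : BbSub Ω, N (c • V) = c * N V := by
    intro c hc V
    refine le_antisymm (hNhom_le c hc V) ?_
    have h := hNhom_le c⁻¹ (by positivity) (c • V)
    rw [inv_smul_smul₀ hc.ne'] at h
    have h2 := mul_le_mul_of_nonneg_left h hc.le
    rw [← mul_assoc, mul_inv_cancel₀ hc.ne', one_mul] at h2
    linarith
  -- subadditivity
  have hNadd : ∀ V W : BbSub Ω, N (V + W) ≤ N V + N W := by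
    intro V W
    have key : ∀ ε : ℝ, 0 < ε → N (V + W) ≤ N V + N W + ε := by
      intro ε hε
      obtain ⟨r₁, hr₁Q, hr₁⟩ := Real.lt_sInf_add_pos (hQne V) (half_pos hε)
      obtain ⟨r₂, hr₂Q, hr₂⟩ := Real.lt_sInf_add_pos (hQne W) (half_pos hε)
      obtain ⟨t₁, ht₁, he₁⟩ := hr₁Q
      obtain ⟨t₂, ht₂, he₂⟩ := hr₂Q
      set t := min t₁ t₂ / 2 with htdef
      have ht : 0 < t := by positivity
      have h2t₁ : 2 * t ≤ t₁ := by
        have := min_le_left t₁ t₂; rw [htdef]; linarith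
      have h2t₂ : 2 * t ≤ t₂ := by
        have := min_le_right t₁ t₂; rw [htdef]; linarith
      have step0 := hNle (V + W) t ht
      have eVW : (fun ω => X ω + t * ((V + W : BbSub Ω) : Ω → ℝ) ω) =
          (fun ω => X ω + t * ((V : Ω → ℝ) ω + (W : Ω → ℝ) ω)) := by
        funext ω; rfl
      rw [eVW] at step0
      have step1 := quot_half hconst haddC hsmulC hH hconv hX V.2 W.2 ht
      have step2 := quot_mono hconst haddC hsmulC hH hconv hX V.2 (by linarith : (0:ℝ) < 2 * t) h2t₁
      have step3 := quot_mono hconst haddC hsmulC hH hconv hX W.2 (by linarith : (0:ℝ) < 2 * t) h2t₂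
      rw [he₁] at step2
      rw [he₂] at step3
      have hNV : N V = sInf (Q V) := rfl
      have hNW : N W = sInf (Q W) := rfl
      rw [← hNV] at hr₁
      rw [← hNW] at hr₂
      linarith
    by_contra hcon
    push_neg at hcon
    have := key ((N (V + W) - (N V + N W)) / 2) (by linarith)
    linarith
  -- value at 0
  have hN0 : 0 ≤ N 0 := by
    refine le_csInf (hQne 0) ?_
    rintro r ⟨t, ht, rfl⟩
    have e : (fun ω => X ω + t * ((0 : BbSub Ω) : Ω → ℝ) ω) = X := by
      funext ω
      show X ω + t * 0 = X ω
      ring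
    rw [e]
    simp
  -- Hahn–Banach
  let f : (BbSub Ω) →ₗ.[ℝ] ℝ := ⟨⊥, 0⟩
  have hf : ∀ x : f.domain, f x ≤ N x := by
    intro x
    have hx0 : (x : BbSub Ω) = 0 := by
      exact (Submodule.mem_bot ℝ).mp x.2
    have hfx : f x = 0 := rfl
    rw [hfx, hx0]
    exact hN0
  obtain ⟨g, -, hg⟩ := exists_extension_of_le_sublinear f N hNhom hNadd hf
  have hgp : ∀ V : BbSub Ω,
      g V ≤ RMax C H (fun ω => X ω + (V : Ω → ℝ) ω) - RMax C H X :=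
    fun V => (hg V).trans (hNp V)
  -- the functional
  let μ : (Ω → ℝ) → ℝ := fun Z => if h : Z ∈ Bb Ω then g ⟨Z, h⟩ else 0
  have hμeq : ∀ (Z : Ω → ℝ) (h : Z ∈ Bb Ω), μ Z = g ⟨Z, h⟩ := fun Z h => dif_pos h
  have hμadd : ∀ A ∈ Bb Ω, ∀ B ∈ Bb Ω, μ (fun ω => A ω + B ω) = μ A + μ B := by
    intro A hA B hB
    rw [hμeq _ (mem_Bb_add hA hB), hμeq _ hA, hμeq _ hB]
    have e : (⟨fun ω => A ω + B ω, mem_Bb_add hA hB⟩ : BbSub Ω) = ⟨A, hA⟩ + ⟨B, hB⟩ :=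
      Subtype.ext (funext fun ω => rfl)
    rw [e, map_add]
  have hμsmul : ∀ Z ∈ Bb Ω, ∀ c : ℝ, μ (fun ω => c * Z ω) = c * μ Z := by
    intro Z hZ c
    rw [hμeq _ (mem_Bb_smul hZ c), hμeq _ hZ]
    have e : (⟨fun ω => c * Z ω, mem_Bb_smul hZ c⟩ : BbSub Ω) = c • ⟨Z, hZ⟩ :=
      Subtype.ext (funext fun ω => rfl)
    rw [e, _root_.map_smul, smul_eq_mul]
  have hμpos : ∀ Z ∈ Bb Ω, (∀ ω, 0 ≤ Z ω) → 0 ≤ μ Z := by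
    intro Z hZ hpos
    rw [hμeq _ hZ]
    have h1 := hgp (-⟨Z, hZ⟩)
    have hmem : (fun ω => X ω + ((-(⟨Z, hZ⟩ : BbSub Ω) : BbSub Ω) : Ω → ℝ) ω) ∈ Bb Ω :=
      mem_Bb_add hX (-(⟨Z, hZ⟩ : BbSub Ω)).2
    have h2 : RMax C H (fun ω => X ω + ((-(⟨Z, hZ⟩ : BbSub Ω) : BbSub Ω) : Ω → ℝ) ω) ≤
        RMax C H X := by
      refine RMax_mono hconst haddC hH hmem hX (fun ω => ?_)
      have hcoe : ((-(⟨Z, hZ⟩ : BbSub Ω) : BbSub Ω) : Ω → ℝ) ω = -(Z ω) := rfl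
      rw [hcoe]
      have := hpos ω
      linarith
    rw [map_neg] at h1
    linarith
  have hμone : μ (fun _ => 1) = 1 := by
    rw [hμeq _ (mem_Bb_const 1)]
    set one : BbSub Ω := ⟨fun _ => 1, mem_Bb_const 1⟩ with hone
    have hup : g one ≤ 1 := by
      have h1 := hgp one
      have e : (fun ω => X ω + ((one : BbSub Ω) : Ω → ℝ) ω) = (fun ω => X ω + 1) := rfl
      rw [e, RMax_add_const hconst haddC hH hX 1] at h1
      linarith
    have hlo : 1 ≤ g one := by
      have h1 := hgp (-one)
      have e : (fun ω => X ω + ((-one : BbSub Ω) : Ω → ℝ) ω) = (fun ω => X ω + (-1)) := by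
        funext ω; rfl
      rw [e, RMax_add_const hconst haddC hH hX (-1), map_neg] at h1
      linarith
    linarith
  refine ⟨μ, ⟨hμadd, hμsmul, hμpos, hμone⟩, ?_⟩
  intro Y hY
  rw [hμeq _ hY, hμeq _ hX]
  have h1 := hgp (⟨Y, hY⟩ - ⟨X, hX⟩)
  have e : (fun ω => X ω + (((⟨Y, hY⟩ - ⟨X, hX⟩ : BbSub Ω)) : Ω → ℝ) ω) = Y := by
    funext ω
    show X ω + (Y ω - X ω) = Y ω
    ring
  rw [e, map_sub] at h1
  linarith
end
end CDRAux

namespace CDRAux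
section
variable {Ω : Type*} [MeasurableSpace Ω]
variable {C : Set (Ω → ℝ)} {H : (Ω → ℝ) → ℝ} {μ : (Ω → ℝ) → ℝ}

lemma mem_Bb_sub {X Y : Ω → ℝ} (hX : X ∈ Bb Ω) (hY : Y ∈ Bb Ω) :
    (fun ω => X ω - Y ω) ∈ Bb Ω := by
  have e : (fun ω => X ω + (-1) * Y ω) = fun ω => X ω - Y ω := by funext ω; ring
  rw [← e]
  exact mem_Bb_add hX (mem_Bb_smul hY (-1))

lemma nplf_zero (hμ : IsNPLF (Ω := Ω) μ) : μ (fun _ => 0) = 0 := by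
  have h := hμ.2.1 (fun _ => 1) (mem_Bb_const 1) 0
  have e : (fun ω => (0:ℝ) * (fun _ : Ω => (1:ℝ)) ω) = (fun _ : Ω => (0:ℝ)) := by
    funext ω; simp
  rw [e] at h
  rw [h, zero_mul]

lemma nplf_mono (hμ : IsNPLF (Ω := Ω) μ) {X Y : Ω → ℝ} (hX : X ∈ Bb Ω) (hY : Y ∈ Bb Ω)
    (hle : ∀ ω, X ω ≤ Y ω) : μ X ≤ μ Y := by
  have hd : (fun ω => Y ω - X ω) ∈ Bb Ω := mem_Bb_sub hY hX
  have h := hμ.1 X hX _ hd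
  have e : (fun ω => X ω + (fun ω => Y ω - X ω) ω) = Y := by funext ω; simp
  rw [e] at h
  have hpos : 0 ≤ μ (fun ω => Y ω - X ω) :=
    hμ.2.2.1 _ hd (fun ω => sub_nonneg.2 (hle ω))
  linarith

lemma Hstar_nonneg (hconst : ∀ m : ℝ, (fun _ => m) ∈ C) (hH : IsPremium C H)
    (hμ : IsNPLF (Ω := Ω) μ) : (0 : EReal) ≤ Hstar C H μ := by
  have h : ((μ (fun _ => 0) - H (fun _ => 0) : ℝ) : EReal) ≤ Hstar C H μ :=
    le_iSup₂_of_le (fun _ => 0) (hconst 0) le_rfl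
  rw [nplf_zero hμ, hH.2.1] at h
  simpa using h

lemma Hstar_ne_bot (hconst : ∀ m : ℝ, (fun _ => m) ∈ C) (hH : IsPremium C H)
    (hμ : IsNPLF (Ω := Ω) μ) : Hstar C H μ ≠ ⊥ := by
  intro h
  have := Hstar_nonneg hconst hH hμ
  rw [h] at this
  exact absurd this (by simp)

lemma term_le_Hstar {Y : Ω → ℝ} (hY : Y ∈ C) :
    ((μ Y - H Y : ℝ) : EReal) ≤ Hstar C H μ :=
  le_iSup₂_of_le Y hY le_rfl

/-- If `Hstar` is finite with value `b`, then `μ X - b ≤ RMax X` for all `X ∈ B_b`. -/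
lemma mu_sub_le_RMax (hCB : C ⊆ Bb Ω) (hconst : ∀ m : ℝ, (fun _ => m) ∈ C)
    (hμ : IsNPLF (Ω := Ω) μ) {X : Ω → ℝ} (hX : X ∈ Bb Ω) {b : ℝ}
    (hb : Hstar C H μ = (b : EReal)) : μ X - b ≤ RMax C H X := by
  refine le_RMax hconst hX (fun X₀ hX₀ hge => ?_)
  have h1 : μ X ≤ μ X₀ := nplf_mono hμ hX (hCB hX₀) hge
  have h2 : μ X₀ - H X₀ ≤ b := by
    have := term_le_Hstar (H := H) (μ := μ) hX₀
    rw [hb] at this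
    exact EReal.coe_le_coe_iff.1 this
  linarith

end
end CDRAux


open CDRAux

/-- dual representation of the maximal risk measure of a convex
premium principle: `R_Max(X) = max_μ (μ(X) − H*(μ))` over all normalized positive
linear functionals `μ` on `B_b`, the maximum being attained, and
`H*(μ) = sup_{X ∈ B_b} (μ(X) − R_Max(X))`. -/
theorem convex_dual_representation {Ω : Type*} [MeasurableSpace Ω]
    (C : Set (Ω → ℝ)) (H : (Ω → ℝ) → ℝ)
    (hCB : C ⊆ Bb Ω)
    (hconst : ∀ m : ℝ, (fun _ => m) ∈ C)
    (haddC : ∀ X ∈ C, ∀ Y ∈ C, (fun ω => X ω + Y ω) ∈ C)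
    (hsmulC : ∀ X ∈ C, ∀ c : ℝ, (fun ω => c * X ω) ∈ C)
    (hH : IsPremium C H) (hconv : IsConvexOn C H) :
    (∀ X ∈ Bb Ω,
      (∃ μ : (Ω → ℝ) → ℝ, IsNPLF μ ∧
        ((RMax C H X : ℝ) : EReal) = (μ X : ℝ) - Hstar C H μ) ∧
      (∀ μ : (Ω → ℝ) → ℝ, IsNPLF μ →
        ((μ X : ℝ) : EReal) - Hstar C H μ ≤ ((RMax C H X : ℝ) : EReal))) ∧
    (∀ μ : (Ω → ℝ) → ℝ, IsNPLF μ →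
      Hstar C H μ = ⨆ X ∈ Bb Ω, ((μ X - RMax C H X : ℝ) : EReal)) := by
  constructor
  · intro X hX
    constructor
    · -- existence of a maximizing μ
      obtain ⟨μ, hμ, hsub⟩ := exists_subgrad hCB hconst haddC hsmulC hH hconv hX
      have hle : Hstar C H μ ≤ ((μ X - RMax C H X : ℝ) : EReal) := by
        refine iSup₂_le (fun Y hY => ?_)
        have h1 : μ Y - H Y ≤ μ X - RMax C H X := by
          have h2 := RMax_le_H hCB hconst haddC hH hY
          have h3 := hsub Y (hCB hY)
          linarith
        exact EReal.coe_le_coe_iff.2 h1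
      have hne_top : Hstar C H μ ≠ ⊤ := (lt_of_le_of_lt hle (EReal.coe_lt_top _)).ne
      have hne_bot : Hstar C H μ ≠ ⊥ := Hstar_ne_bot hconst hH hμ
      set b := (Hstar C H μ).toReal with hbdef
      have hb : Hstar C H μ = (b : EReal) := (EReal.coe_toReal hne_top hne_bot).symm
      have hge : ((μ X - RMax C H X : ℝ) : EReal) ≤ Hstar C H μ := by
        rw [hb]
        refine EReal.coe_le_coe_iff.2 ?_
        have := mu_sub_le_RMax hCB hconst hμ hX hb
        linarith
      have hHs : Hstar C H μ = ((μ X - RMax C H X : ℝ) : EReal) := le_antisymm hle hge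
      refine ⟨μ, hμ, ?_⟩
      rw [hHs, ← EReal.coe_sub]
      refine (EReal.coe_eq_coe_iff.2 ?_)
      ring
    · -- the inequality for every μ
      intro μ hμ
      by_cases hT : Hstar C H μ = ⊤
      · rw [hT, EReal.sub_top]
        exact bot_le
      · have hne_bot : Hstar C H μ ≠ ⊥ := Hstar_ne_bot hconst hH hμ
        set b := (Hstar C H μ).toReal with hbdef
        have hb : Hstar C H μ = (b : EReal) := (EReal.coe_toReal hT hne_bot).symm
        rw [hb, ← EReal.coe_sub]
        exact EReal.coe_le_coe_iff.2 (mu_sub_le_RMax hCB hconst hμ hX hb)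
  · intro μ hμ
    refine le_antisymm ?_ ?_
    · refine iSup₂_le (fun Y hY => ?_)
      refine le_iSup₂_of_le Y (hCB hY) ?_
      exact EReal.coe_le_coe_iff.2 (by
        have := RMax_le_H hCB hconst haddC hH hY
        linarith)
    · refine iSup₂_le (fun Y hY => ?_)
      by_cases hT : Hstar C H μ = ⊤
      · rw [hT]; exact le_top
      · have hne_bot : Hstar C H μ ≠ ⊥ := Hstar_ne_bot hconst hH hμ
        set b := (Hstar C H μ).toReal with hbdef
        have hb : Hstar C H μ = (b : EReal) := (EReal.coe_toReal hT hne_bot).symm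
        rw [hb]
        refine EReal.coe_le_coe_iff.2 ?_
        have := mu_sub_le_RMax hCB hconst hμ hY hb
        linarith
end

section
/- Let C be a linear subspace of B_b containing the constant functions and let H : C → ℝ be a sublinear premium principle. Then R_Max is a coherent risk measure: for every X ∈ B_b, R_Max(X) = max_{μ ∈ 𝒫} μ(X), where 𝒫 := {μ : μ is a normalized positive linear functional on B_b with μ(X) ≤ H(X) for all X ∈ C}; in particular the maximum is attained and 𝒫 is nonempty. -/
open MeasureTheory

lemma Bb_add {Ω : Type*} [MeasurableSpace Ω] {X Y : Ω → ℝ} (hX : X ∈ Bb Ω) (hY : Y ∈ Bb Ω) :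
    (fun ω => X ω + Y ω) ∈ Bb Ω := by
  obtain ⟨mX, cX, hcX⟩ := hX; obtain ⟨mY, cY, hcY⟩ := hY
  exact ⟨mX.add mY, cX + cY, fun ω => (abs_add_le _ _).trans (add_le_add (hcX ω) (hcY ω))⟩

lemma Bb_smul {Ω : Type*} [MeasurableSpace Ω] {X : Ω → ℝ} (hX : X ∈ Bb Ω) (c : ℝ) :
    (fun ω => c * X ω) ∈ Bb Ω := by
  obtain ⟨mX, cX, hcX⟩ := hX
  exact ⟨mX.const_mul c, |c| * cX, fun ω => by
    rw [abs_mul]; exact mul_le_mul_of_nonneg_left (hcX ω) (abs_nonneg c)⟩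

lemma Bb_zero {Ω : Type*} [MeasurableSpace Ω] : (fun _ : Ω => (0:ℝ)) ∈ Bb Ω :=
  ⟨measurable_const, 0, fun ω => by simp⟩

lemma Bb_const {Ω : Type*} [MeasurableSpace Ω] (m : ℝ) : (fun _ : Ω => m) ∈ Bb Ω :=
  ⟨measurable_const, |m|, fun ω => le_refl _⟩

def Sset {Ω : Type*} (C : Set (Ω → ℝ)) (H : (Ω → ℝ) → ℝ) (X : Ω → ℝ) : Set ℝ :=
  {y | ∃ X₀ ∈ C, (∀ ω, X ω ≤ X₀ ω) ∧ H X₀ = y}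

lemma RMax_eq {Ω : Type*} (C : Set (Ω → ℝ)) (H : (Ω → ℝ) → ℝ) (X : Ω → ℝ) :
    RMax C H X = sInf (Sset C H X) := rfl

def BbSub (Ω : Type*) [MeasurableSpace Ω] : Submodule ℝ (Ω → ℝ) where
  carrier := Bb Ω
  zero_mem' := Bb_zero
  add_mem' := Bb_add
  smul_mem' c _ hX := Bb_smul hX c

section Main
variable {Ω : Type*} [MeasurableSpace Ω]
  (C : Set (Ω → ℝ)) (H : (Ω → ℝ) → ℝ)
  (hCB : C ⊆ Bb Ω)
  (hconst : ∀ m : ℝ, (fun _ => m) ∈ C)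
  (haddC : ∀ X ∈ C, ∀ Y ∈ C, (fun ω => X ω + Y ω) ∈ C)
  (hsmulC : ∀ X ∈ C, ∀ c : ℝ, (fun ω => c * X ω) ∈ C)
  (hH : IsPremium C H) (hconv : IsConvexOn C H)
  (hpos : ∀ X ∈ C, ∀ l : ℝ, 0 < l → H (fun ω => l * X ω) = l * H X)


include hH hconst in
lemma Hconst (m : ℝ) : H (fun _ => m) = m := by
  obtain ⟨hP1, hP2, _⟩ := hH
  have h := hP1 (fun _ => 0) (hconst 0) m
  have e : (fun ω : Ω => (fun _ : Ω => (0:ℝ)) ω + m) = (fun _ : Ω => m) := by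
    funext ω; simp
  rw [e, hP2, zero_add] at h
  exact h

include hH hconv hpos haddC hsmulC in
lemma Hsub : ∀ X ∈ C, ∀ Y ∈ C, H (fun ω => X ω + Y ω) ≤ H X + H Y := by
  intro X hX Y hY
  have hW : (fun ω => (1/2 : ℝ) * X ω + (1 - 1/2) * Y ω) ∈ C :=
    haddC _ (hsmulC X hX (1/2)) _ (hsmulC Y hY (1 - 1/2))
  have hXY : (fun ω => X ω + Y ω) = (fun ω => 2 * ((1/2 : ℝ) * X ω + (1 - 1/2) * Y ω)) := by
    funext ω; ring
  calc H (fun ω => X ω + Y ω)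
      = 2 * H (fun ω => (1/2 : ℝ) * X ω + (1 - 1/2) * Y ω) := by
        rw [hXY]; exact hpos _ hW 2 two_pos
    _ ≤ 2 * ((1/2) * H X + (1 - 1/2) * H Y) := by
        have := hconv X hX Y hY (1/2) (by norm_num) (by norm_num)
        linarith
    _ = H X + H Y := by ring

include hconst in
lemma Sne : ∀ X ∈ Bb Ω, Set.Nonempty (Sset C H X) := by
  rintro X ⟨-, c, hc⟩
  exact ⟨H (fun _ => c), fun _ => c, hconst c, fun ω => (abs_le.1 (hc ω)).2, rfl⟩

include hconst haddC hH in
lemma Sbdd : ∀ X ∈ Bb Ω, BddBelow (Sset C H X) := by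
  obtain ⟨hP1, hP2, hP3⟩ := hH
  rintro X ⟨-, c, hc⟩
  refine ⟨-c, ?_⟩
  rintro y ⟨X₀, hX₀, hle, rfl⟩
  have h1 : (fun ω => X₀ ω + c) ∈ C := haddC _ hX₀ _ (hconst c)
  have h2 : 0 ≤ H (fun ω => X₀ ω + c) := by
    refine hP3 _ h1 fun ω => ?_
    have := (abs_le.1 (hc ω)).1
    have := hle ω
    linarith
  rw [hP1 X₀ hX₀ c] at h2
  linarith

include hconst haddC hH hCB in
lemma RMax_le_H : ∀ Z ∈ C, RMax C H Z ≤ H Z := fun Z hZ =>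
  csInf_le (Sbdd C H hconst haddC hH Z (hCB hZ)) ⟨Z, hZ, fun ω => le_refl _, rfl⟩

include hconst haddC hH in
lemma RMax_mono : ∀ X ∈ Bb Ω, ∀ Y : Ω → ℝ, (∀ ω, X ω ≤ Y ω) →
    Set.Nonempty (Sset C H Y) → RMax C H X ≤ RMax C H Y := by
  intro X hX Y hle hne
  refine csInf_le_csInf (Sbdd C H hconst haddC hH X hX) hne ?_
  rintro y ⟨X₀, hX₀, hle₀, rfl⟩
  exact ⟨X₀, hX₀, fun ω => (hle ω).trans (hle₀ ω), rfl⟩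

include hconst haddC hH in
lemma RMax_zero : RMax C H (fun _ => 0) = 0 := by
  have hP2 := hH.2.1
  have hP3 := hH.2.2
  refine le_antisymm (csInf_le (Sbdd C H hconst haddC hH _ Bb_zero)
    ⟨(fun _ => 0), hconst 0, fun ω => le_refl _, hP2⟩) ?_
  refine le_csInf (Sne C H hconst _ Bb_zero) ?_
  rintro y ⟨X₀, hX₀, hle, rfl⟩
  exact hP3 _ hX₀ hle

include hconst haddC hsmulC hH hconv hpos in
lemma RMax_subadd : ∀ X ∈ Bb Ω, ∀ Y ∈ Bb Ω,
    RMax C H (fun ω => X ω + Y ω) ≤ RMax C H X + RMax C H Y := by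
  intro X hX Y hY
  have key : ∀ a ∈ Sset C H X, ∀ b ∈ Sset C H Y,
      RMax C H (fun ω => X ω + Y ω) ≤ a + b := by
    rintro a ⟨X₀, hX₀, hleX, rfl⟩ b ⟨Y₀, hY₀, hleY, rfl⟩
    have hmem : H (fun ω => X₀ ω + Y₀ ω) ∈ Sset C H (fun ω => X ω + Y ω) :=
      ⟨fun ω => X₀ ω + Y₀ ω, haddC _ hX₀ _ hY₀,
        fun ω => add_le_add (hleX ω) (hleY ω), rfl⟩
    exact (csInf_le (Sbdd C H hconst haddC hH _ (Bb_add hX hY)) hmem).trans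
      (Hsub C H haddC hsmulC hH hconv hpos X₀ hX₀ Y₀ hY₀)
  have h2 : ∀ a ∈ Sset C H X, RMax C H (fun ω => X ω + Y ω) ≤ a + RMax C H Y := by
    intro a ha
    have := le_csInf (Sne C H hconst Y hY)
      (fun b hb => (by linarith [key a ha b hb] :
        RMax C H (fun ω => X ω + Y ω) - a ≤ b))
    rw [RMax_eq C H Y]; linarith [this]
  have := le_csInf (Sne C H hconst X hX)
    (fun a ha => (by linarith [h2 a ha] :
      RMax C H (fun ω => X ω + Y ω) - RMax C H Y ≤ a))
  rw [RMax_eq C H X] at *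
  linarith [this]

include hconst haddC hsmulC hH hpos in
lemma RMax_smul : ∀ X ∈ Bb Ω, ∀ c : ℝ, 0 < c →
    RMax C H (fun ω => c * X ω) = c * RMax C H X := by
  have hle : ∀ X ∈ Bb Ω, ∀ c : ℝ, 0 < c →
      RMax C H (fun ω => c * X ω) ≤ c * RMax C H X := by
    intro X hX c hc
    have h1 : ∀ a ∈ Sset C H X, RMax C H (fun ω => c * X ω) ≤ c * a := by
      rintro a ⟨X₀, hX₀, hle₀, rfl⟩
      have hmem : H (fun ω => c * X₀ ω) ∈ Sset C H (fun ω => c * X ω) :=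
        ⟨fun ω => c * X₀ ω, hsmulC _ hX₀ c,
          fun ω => mul_le_mul_of_nonneg_left (hle₀ ω) hc.le, rfl⟩
      rw [show H (fun ω => c * X₀ ω) = c * H X₀ from hpos _ hX₀ c hc] at hmem
      exact csInf_le (Sbdd C H hconst haddC hH _ (Bb_smul hX c)) hmem
    have h2 : RMax C H (fun ω => c * X ω) / c ≤ RMax C H X := by
      rw [RMax_eq C H X]
      refine le_csInf (Sne C H hconst X hX) fun a ha => ?_
      rw [div_le_iff₀ hc, mul_comm]
      exact h1 a ha
    calc RMax C H (fun ω => c * X ω) = c * (RMax C H (fun ω => c * X ω) / c) := by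
          field_simp
      _ ≤ c * RMax C H X := mul_le_mul_of_nonneg_left h2 hc.le
  intro X hX c hc
  refine le_antisymm (hle X hX c hc) ?_
  have h := hle _ (Bb_smul hX c) (1/c) (by positivity)
  have e : (fun ω => (1/c) * (fun ω => c * X ω) ω) = X := by
    funext ω; field_simp
  rw [e] at h
  calc c * RMax C H X ≤ c * ((1/c) * RMax C H (fun ω => c * X ω)) :=
        mul_le_mul_of_nonneg_left h hc.le
    _ = RMax C H (fun ω => c * X ω) := by field_simp

end Main


/-- for a sublinear premium principle, `R_Max` is a coherent risk
measure: `R_Max(X) = max_{μ ∈ 𝒫} μ(X)` where `𝒫` is the (nonempty) set of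
normalized positive linear functionals dominated by `H` on `C`. -/
theorem sublinear_coherent_representation {Ω : Type*} [MeasurableSpace Ω]
    (C : Set (Ω → ℝ)) (H : (Ω → ℝ) → ℝ)
    (hCB : C ⊆ Bb Ω)
    (hconst : ∀ m : ℝ, (fun _ => m) ∈ C)
    (haddC : ∀ X ∈ C, ∀ Y ∈ C, (fun ω => X ω + Y ω) ∈ C)
    (hsmulC : ∀ X ∈ C, ∀ c : ℝ, (fun ω => c * X ω) ∈ C)
    (hH : IsPremium C H) (hconv : IsConvexOn C H)
    (hpos : ∀ X ∈ C, ∀ l : ℝ, 0 < l → H (fun ω => l * X ω) = l * H X) :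
    (∃ μ : (Ω → ℝ) → ℝ, IsNPLF μ ∧ ∀ Z ∈ C, μ Z ≤ H Z) ∧
    (∀ X ∈ Bb Ω,
      IsGreatest {y : ℝ | ∃ μ : (Ω → ℝ) → ℝ,
        (IsNPLF μ ∧ ∀ Z ∈ C, μ Z ≤ H Z) ∧ y = μ X} (RMax C H X)) := by
  classical
  -- Ω is nonempty (otherwise the premium axioms are contradictory)
  have hΩ : Nonempty Ω := by
    by_contra h
    have e : (fun ω : Ω => (fun _ : Ω => (0:ℝ)) ω + 1) = (fun _ : Ω => (0:ℝ)) :=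
      funext fun ω => absurd ⟨ω⟩ h
    have h1 := hH.1 (fun _ => 0) (hconst 0) 1
    rw [e, hH.2.1] at h1
    linarith
  -- the sublinear functional N on the submodule BbSub
  set N : BbSub Ω → ℝ := fun x => RMax C H x.val with hN
  have N_hom : ∀ c : ℝ, 0 < c → ∀ x : BbSub Ω, N (c • x) = c * N x := by
    intro c hc x
    have e : ((c • x : BbSub Ω) : Ω → ℝ) = fun ω => c * x.val ω := rfl
    show RMax C H ((c • x : BbSub Ω) : Ω → ℝ) = c * RMax C H x.val
    rw [e]
    exact RMax_smul C H hconst haddC hsmulC hH hpos _ x.2 c hc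
  have N_add : ∀ x y : BbSub Ω, N (x + y) ≤ N x + N y := by
    intro x y
    have e : ((x + y : BbSub Ω) : Ω → ℝ) = fun ω => x.val ω + y.val ω := rfl
    show RMax C H ((x + y : BbSub Ω) : Ω → ℝ) ≤ RMax C H x.val + RMax C H y.val
    rw [e]
    exact RMax_subadd C H hconst haddC hsmulC hH hconv hpos _ x.2 _ y.2
  -- Hahn–Banach extension from the span of a nonzero vector
  have build : ∀ x : BbSub Ω, x ≠ 0 → ∃ g : BbSub Ω →ₗ[ℝ] ℝ,
      g x = RMax C H x.val ∧ ∀ z : BbSub Ω, g z ≤ RMax C H z.val := by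
    intro x hx
    have hf : ∀ z : (LinearPMap.mkSpanSingleton (K := ℝ) (L := ℝ) (σ := RingHom.id ℝ) x (RMax C H x.val) hx).domain,
        (LinearPMap.mkSpanSingleton (K := ℝ) (L := ℝ) (σ := RingHom.id ℝ) x (RMax C H x.val) hx) z ≤ N z := by
      rintro ⟨z, hz⟩
      obtain ⟨c, rfl⟩ := Submodule.mem_span_singleton.1 hz
      rw [LinearPMap.mkSpanSingleton'_apply]
      rcases lt_trichotomy c 0 with hc | hc | hc
      · -- c < 0
        have hW : RMax C H ((c • x : BbSub Ω) : Ω → ℝ) +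
            RMax C H (((-c) • x : BbSub Ω) : Ω → ℝ) ≥ 0 := by
          have hsum := RMax_subadd C H hconst haddC hsmulC hH hconv hpos
            _ (c • x).2 _ ((-c) • x).2
          have e : (fun ω => ((c • x : BbSub Ω) : Ω → ℝ) ω +
              (((-c) • x : BbSub Ω) : Ω → ℝ) ω) = (fun _ : Ω => (0:ℝ)) := by
            funext ω
            show c * x.val ω + (-c) * x.val ω = 0
            ring
          rw [e, RMax_zero C H hconst haddC hH] at hsum
          linarith
        have e2 : RMax C H (((-c) • x : BbSub Ω) : Ω → ℝ) = (-c) * RMax C H x.val := by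
          show RMax C H (fun ω => (-c) * x.val ω) = (-c) * RMax C H x.val
          exact RMax_smul C H hconst haddC hsmulC hH hpos _ x.2 (-c) (by linarith)
        rw [e2] at hW
        show c • RMax C H x.val ≤ N (c • x)
        simp only [smul_eq_mul]
        show c * RMax C H x.val ≤ RMax C H ((c • x : BbSub Ω) : Ω → ℝ)
        linarith
      · subst hc
        show (0:ℝ) • RMax C H x.val ≤ N ((0:ℝ) • x)
        rw [zero_smul, zero_smul]
        show (0:ℝ) ≤ RMax C H ((0 : BbSub Ω) : Ω → ℝ)
        rw [show ((0 : BbSub Ω) : Ω → ℝ) = (fun _ : Ω => (0:ℝ)) from rfl,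
          RMax_zero C H hconst haddC hH]
      · rw [N_hom c hc x]
        simp [smul_eq_mul, le_refl]
        exact le_refl _
    obtain ⟨g, hg1, hg2⟩ := exists_extension_of_le_sublinear
      (LinearPMap.mkSpanSingleton (K := ℝ) (L := ℝ) (σ := RingHom.id ℝ) x (RMax C H x.val) hx) N N_hom N_add hf
    refine ⟨g, ?_, fun z => hg2 z⟩
    have h := hg1 ⟨x, Submodule.mem_span_singleton_self x⟩
    rwa [LinearPMap.mkSpanSingleton_apply] at h
  -- package a dominated linear functional as an NPLF
  have mkμ : ∀ g : BbSub Ω →ₗ[ℝ] ℝ, (∀ z : BbSub Ω, g z ≤ RMax C H z.val) →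
      ∃ μ : (Ω → ℝ) → ℝ, (IsNPLF μ ∧ ∀ Z ∈ C, μ Z ≤ H Z) ∧
        ∀ (Z : Ω → ℝ) (hZ : Z ∈ Bb Ω), μ Z = g ⟨Z, hZ⟩ := by
    intro g hg
    refine ⟨fun Z => if h : Z ∈ Bb Ω then g ⟨Z, h⟩ else 0, ⟨⟨?_, ?_, ?_, ?_⟩, ?_⟩, ?_⟩
    · intro X hX Y hY
      beta_reduce
      rw [dif_pos hX, dif_pos hY, dif_pos (Bb_add hX hY)]
      rw [show (⟨fun ω => X ω + Y ω, Bb_add hX hY⟩ : BbSub Ω) = ⟨X, hX⟩ + ⟨Y, hY⟩ from rfl,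
        map_add]
    · intro X hX c
      beta_reduce
      rw [dif_pos hX, dif_pos (Bb_smul hX c)]
      rw [show (⟨fun ω => c * X ω, Bb_smul hX c⟩ : BbSub Ω) = c • ⟨X, hX⟩ from rfl,
        _root_.map_smul, smul_eq_mul]
    · intro X hX hge
      beta_reduce
      rw [dif_pos hX]
      have h2 := hg (-(⟨X, hX⟩ : BbSub Ω))
      rw [map_neg] at h2
      have h3 : RMax C H ((-(⟨X, hX⟩ : BbSub Ω) : BbSub Ω) : Ω → ℝ) ≤
          RMax C H (fun _ : Ω => (0:ℝ)) := by
        refine RMax_mono C H hconst haddC hH _ (-(⟨X, hX⟩ : BbSub Ω)).2 _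
          (fun ω => ?_) (Sne C H hconst _ Bb_zero)
        show -X ω ≤ 0
        linarith [hge ω]
      rw [RMax_zero C H hconst haddC hH] at h3
      linarith
    · beta_reduce
      rw [dif_pos (Bb_const 1)]
      have hub : g ⟨fun _ => 1, Bb_const 1⟩ ≤ 1 := by
        have h1 := hg ⟨fun _ => 1, Bb_const 1⟩
        have h2 := RMax_le_H C H hCB hconst haddC hH (fun _ => (1:ℝ)) (hconst 1)
        have h3 := Hconst C H hconst hH 1
        simp only [hN] at h1
        linarith
      have hlb : (1:ℝ) ≤ g ⟨fun _ => 1, Bb_const 1⟩ := by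
        have h2 := hg (-(⟨fun _ => 1, Bb_const 1⟩ : BbSub Ω))
        rw [map_neg] at h2
        have h3 : RMax C H ((-(⟨fun _ => 1, Bb_const 1⟩ : BbSub Ω) : BbSub Ω) : Ω → ℝ) ≤
            H (fun _ => (-1:ℝ)) :=
          RMax_le_H C H hCB hconst haddC hH (fun _ => (-1:ℝ)) (hconst (-1))
        have h4 := Hconst C H hconst hH (-1)
        linarith
      linarith
    · intro Z hZ
      beta_reduce
      rw [dif_pos (hCB hZ)]
      exact (hg ⟨Z, hCB hZ⟩).trans (RMax_le_H C H hCB hconst haddC hH Z hZ)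
    · intro Z hZ
      beta_reduce
      rw [dif_pos hZ]
  -- existence of a maximizing functional for each X
  have main : ∀ X ∈ Bb Ω, ∃ μ : (Ω → ℝ) → ℝ,
      (IsNPLF μ ∧ ∀ Z ∈ C, μ Z ≤ H Z) ∧ μ X = RMax C H X := by
    intro X hX
    by_cases hX0 : (⟨X, hX⟩ : BbSub Ω) = 0
    · have hone : (fun _ : Ω => (1:ℝ)) ∈ Bb Ω := Bb_const 1
      have hne : (⟨fun _ => 1, hone⟩ : BbSub Ω) ≠ 0 := by
        intro h
        exact one_ne_zero (congrFun (congrArg Subtype.val h) (Classical.arbitrary Ω))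
      obtain ⟨g, hgx, hg⟩ := build _ hne
      obtain ⟨μ, hμ, heval⟩ := mkμ g hg
      refine ⟨μ, hμ, ?_⟩
      have hXeq : X = (fun _ : Ω => (0:ℝ)) := congrArg Subtype.val hX0
      rw [heval X hX, show (⟨X, hX⟩ : BbSub Ω) = 0 from hX0, map_zero, hXeq,
        RMax_zero C H hconst haddC hH]
    · obtain ⟨g, hgx, hg⟩ := build ⟨X, hX⟩ hX0
      obtain ⟨μ, hμ, heval⟩ := mkμ g hg
      exact ⟨μ, hμ, by rw [heval X hX]; exact hgx⟩
  constructor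
  · obtain ⟨μ, hμ, -⟩ := main (fun _ => 0) Bb_zero
    exact ⟨μ, hμ⟩
  · intro X hX
    constructor
    · obtain ⟨μ, hμ, hval⟩ := main X hX
      exact ⟨μ, hμ, hval.symm⟩
    · rintro y ⟨μ, ⟨⟨hadd, hsmul, hposμ, -⟩, hdom⟩, rfl⟩
      rw [RMax_eq C H X]
      refine le_csInf (Sne C H hconst X hX) ?_
      rintro b ⟨X₀, hX₀, hle, rfl⟩
      have hX₀B := hCB hX₀
      have hD : (fun ω => X₀ ω + (-1) * X ω) ∈ Bb Ω := Bb_add hX₀B (Bb_smul hX (-1))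
      have h1 := hadd X hX _ hD
      have e : (fun ω => X ω + (fun ω => X₀ ω + (-1) * X ω) ω) = X₀ := by
        funext ω
        show X ω + (X₀ ω + (-1) * X ω) = X₀ ω
        ring
      rw [e] at h1
      have h2 : 0 ≤ μ (fun ω => X₀ ω + (-1) * X ω) := by
        refine hposμ _ hD fun ω => ?_
        show 0 ≤ X₀ ω + (-1) * X ω
        linarith [hle ω]
      have h3 : μ X₀ ≤ H X₀ := hdom X₀ hX₀
      linarith
end

section
/- Let (Ω, 𝓕, P) be a probability space, θ > 0, and let Q be a probability measure on (Ω, 𝓕) that is absolutely continuous with respect to P with density Z := dQ/dP satisfying ∫ Z² dP < ∞. Then sup over all bounded measurable X : Ω → ℝ of (∫ X dQ − ∫ X dP − (θ/2)·Var_P(X)) equals (1/(2θ))·Var_P(Z), where Var_P(X) := ∫ (X − ∫ X dP)² dP. -/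
open MeasureTheory

/-- The variance `Var_P(X) = ∫ (X − ∫ X dP)² dP`. -/
noncomputable def varP {Ω : Type*} [MeasurableSpace Ω] (P : Measure Ω) (X : Ω → ℝ) : ℝ :=
  ∫ ω, (X ω - ∫ ω', X ω' ∂P) ^ 2 ∂P

lemma integrable_of_bddMeas {Ω : Type*} [MeasurableSpace Ω] (P : Measure Ω) [IsFiniteMeasure P]
    {X : Ω → ℝ} (hXm : Measurable X) {c : ℝ} (hb : ∀ ω, |X ω| ≤ c) : Integrable X P :=
  ⟨hXm.aestronglyMeasurable,
    HasFiniteIntegral.of_bounded (C := c) (Filter.Eventually.of_forall fun ω => by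
      simpa using hb ω)⟩

lemma var_formula {Ω : Type*} [MeasurableSpace Ω] (P : Measure Ω) [IsProbabilityMeasure P]
    {X : Ω → ℝ} (hX : Integrable X P) (hX2 : Integrable (fun ω => X ω ^ 2) P) :
    varP P X = (∫ ω, X ω ^ 2 ∂P) - (∫ ω, X ω ∂P) ^ 2 := by
  set c := ∫ ω, X ω ∂P with hc
  have h2 : Integrable (fun ω => 2 * c * X ω - c ^ 2) P :=
    (hX.const_mul _).sub (integrable_const _)
  have hcongr : (fun ω => (X ω - c) ^ 2) = fun ω => X ω ^ 2 - (2 * c * X ω - c ^ 2) := by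
    funext ω; ring
  rw [varP, ← hc, hcongr, integral_sub hX2 h2, integral_sub (hX.const_mul _) (integrable_const _),
    integral_const_mul, integral_const]
  simp [← hc]
  ring

lemma amgm_aux (θ a b : ℝ) (hθ : 0 < θ) : a * b ≤ θ / 2 * a ^ 2 + 1 / (2 * θ) * b ^ 2 := by
  rw [← sub_nonneg, show θ / 2 * a ^ 2 + 1 / (2 * θ) * b ^ 2 - a * b = (θ * a - b) ^ 2 / (2 * θ) by
    field_simp; ring]
  positivity


open scoped ENNReal NNReal Topology
open Filter

/-- the convex dual of the variance premium principle
`H(X) = E_P(X) + (θ/2)·Var_P(X)` at a probability measure `Q ≪ P` with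
square-integrable density `Z = dQ/dP` is `(1/(2θ))·Var_P(Z)`:
`sup_X (E_Q(X) − E_P(X) − (θ/2)Var_P(X)) = (1/(2θ))·Var_P(Z)` over bounded
measurable `X`. -/
theorem variance_principle_dual {Ω : Type*} [MeasurableSpace Ω]
    (P Q : Measure Ω) [IsProbabilityMeasure P] [IsProbabilityMeasure Q]
    (θ : ℝ) (hθ : 0 < θ)
    (Z : Ω → ℝ) (hZm : Measurable Z) (hZnn : ∀ᵐ ω ∂P, 0 ≤ Z ω)
    (hQP : Q = P.withDensity (fun ω => ENNReal.ofReal (Z ω)))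
    (hZ2 : Integrable (fun ω => Z ω ^ 2) P) :
    IsLUB {y : ℝ | ∃ X ∈ Bb Ω,
        y = (∫ ω, X ω ∂Q) - (∫ ω, X ω ∂P) - θ / 2 * varP P X}
      (1 / (2 * θ) * varP P Z) := by
  have hZint : Integrable Z P := by
    refine (hZ2.add (integrable_const 1)).mono' hZm.aestronglyMeasurable
      (Filter.Eventually.of_forall fun ω => ?_)
    have h2 : |Z ω| ≤ Z ω ^ 2 + 1 := by nlinarith [sq_nonneg (|Z ω| - 1), sq_abs (Z ω)]
    simpa [Real.norm_eq_abs] using h2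
  have hZ1 : ∫ ω, Z ω ∂P = 1 := by
    have h1 : ∫⁻ ω, ENNReal.ofReal (Z ω) ∂P = 1 := by
      have h := (measure_univ (μ := Q))
      rw [hQP] at h
      simpa [withDensity_apply _ MeasurableSet.univ] using h
    rw [integral_eq_lintegral_of_nonneg_ae hZnn hZm.aestronglyMeasurable, h1]; simp
  have hintQ : ∀ f : Ω → ℝ, ∫ ω, f ω ∂Q = ∫ ω, Z ω * f ω ∂P := by
    intro f
    rw [hQP]
    have he : (fun ω => ENNReal.ofReal (Z ω)) = fun ω => ((Z ω).toNNReal : ℝ≥0∞) := rfl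
    rw [he, integral_withDensity_eq_integral_smul hZm.real_toNNReal f]
    refine integral_congr_ae ?_
    filter_upwards [hZnn] with ω h
    simp [NNReal.smul_def, Real.coe_toNNReal _ h]
  set M := ∫ ω, Z ω ^ 2 ∂P with hM
  have hvarZ : varP P Z = M - 1 := by
    rw [var_formula P hZint hZ2, hZ1, ← hM]; ring
  constructor
  · rintro y ⟨X, ⟨hXm, c, hXb⟩, rfl⟩
    have hXint : Integrable X P := integrable_of_bddMeas P hXm hXb
    set c₀ := ∫ ω, X ω ∂P with hc₀
    have hXZ : Integrable (fun ω => Z ω * X ω) P := by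
      refine (hZint.norm.const_mul c).mono' ((hZm.mul hXm).aestronglyMeasurable)
        (Filter.Eventually.of_forall fun ω => ?_)
      simp only [Real.norm_eq_abs, abs_mul, norm_norm]
      rw [mul_comm c]
      exact mul_le_mul_of_nonneg_left (hXb ω) (abs_nonneg _)
    have hprod : Integrable (fun ω => (X ω - c₀) * (Z ω - 1)) P := by
      refine ((hZint.sub (integrable_const 1)).norm.const_mul (c + |c₀|)).mono'
        (((hXm.sub measurable_const).mul (hZm.sub measurable_const)).aestronglyMeasurable)
        (Filter.Eventually.of_forall fun ω => ?_)
      simp only [Real.norm_eq_abs, abs_mul, norm_norm]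
      have h1 : |X ω - c₀| ≤ c + |c₀| := (abs_sub _ _).trans (by linarith [hXb ω])
      exact mul_le_mul_of_nonneg_right h1 (abs_nonneg _)
    have hXsq : Integrable (fun ω => (X ω - c₀) ^ 2) P := by
      refine integrable_of_bddMeas P ((hXm.sub measurable_const).pow measurable_const)
        (c := (c + |c₀|) ^ 2) fun ω => ?_
      rw [abs_of_nonneg (sq_nonneg _)]
      nlinarith [abs_le.1 (hXb ω), abs_nonneg c₀, le_abs_self c₀, neg_abs_le c₀]
    have hWsq : Integrable (fun ω => (Z ω - 1) ^ 2) P := by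
      have h : (fun ω => (Z ω - 1) ^ 2) = fun ω => Z ω ^ 2 - (2 * Z ω - 1) :=
        funext fun ω => by ring
      rw [h]; exact hZ2.sub ((hZint.const_mul 2).sub (integrable_const 1))
    have hexp : ∫ ω, (X ω - c₀) * (Z ω - 1) ∂P = (∫ ω, Z ω * X ω ∂P) - c₀ := by
      have h : (fun ω => (X ω - c₀) * (Z ω - 1)) =
          fun ω => Z ω * X ω - (X ω + c₀ * Z ω - c₀) := funext fun ω => by ring
      have hZc : Integrable (fun ω => c₀ * Z ω) P := hZint.const_mul c₀
      have hadd : Integrable (fun ω => X ω + c₀ * Z ω) P := hXint.add hZc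
      have hsub : Integrable (fun ω => X ω + c₀ * Z ω - c₀) P := hadd.sub (integrable_const c₀)
      rw [h, integral_sub hXZ hsub, integral_sub hadd (integrable_const c₀),
        integral_add hXint hZc, integral_const_mul, hZ1, integral_const]
      simp [← hc₀]
    have hptw : ∀ ω, (X ω - c₀) * (Z ω - 1) ≤
        θ / 2 * (X ω - c₀) ^ 2 + 1 / (2 * θ) * (Z ω - 1) ^ 2 := fun ω =>
      amgm_aux θ _ _ hθ
    have hint : ∫ ω, (X ω - c₀) * (Z ω - 1) ∂P ≤
        ∫ ω, (θ / 2 * (X ω - c₀) ^ 2 + 1 / (2 * θ) * (Z ω - 1) ^ 2) ∂P :=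
      integral_mono hprod ((hXsq.const_mul _).add (hWsq.const_mul _)) hptw
    have hrhs : ∫ ω, (θ / 2 * (X ω - c₀) ^ 2 + 1 / (2 * θ) * (Z ω - 1) ^ 2) ∂P =
        θ / 2 * varP P X + 1 / (2 * θ) * varP P Z := by
      rw [integral_add (hXsq.const_mul _) (hWsq.const_mul _), integral_const_mul,
        integral_const_mul, varP, varP, ← hc₀, hZ1]
    rw [hintQ X]
    rw [hexp] at hint
    rw [hrhs] at hint
    linarith
  · intro b hb
    set g : ℕ → Ω → ℝ := fun n ω => max (min (Z ω) n) 0 with hg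
    have hgm : ∀ n, Measurable (g n) := fun n =>
      (hZm.min measurable_const).max measurable_const
    have hgb : ∀ n ω, |g n ω| ≤ n := fun n ω => by
      rw [abs_of_nonneg (le_max_right _ _)]
      exact max_le (min_le_right _ _) (Nat.cast_nonneg n)
    have hgle : ∀ᵐ ω ∂P, ∀ n, |g n ω| ≤ Z ω := by
      filter_upwards [hZnn] with ω h
      intro n
      rw [abs_of_nonneg (le_max_right _ _)]
      exact max_le (min_le_left _ _) h
    have hgtend : ∀ᵐ ω ∂P, Tendsto (fun n => g n ω) atTop (𝓝 (Z ω)) := by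
      filter_upwards [hZnn] with ω h
      apply tendsto_atTop_of_eventually_const (i₀ := Nat.ceil (Z ω))
      intro n hn
      have hZn : Z ω ≤ n := (Nat.le_ceil _).trans (Nat.cast_le.2 hn)
      simp [hg, min_eq_left hZn, max_eq_left h]
    have haT : Tendsto (fun n => ∫ ω, Z ω * g n ω ∂P) atTop (𝓝 M) := by
      rw [hM]
      refine tendsto_integral_of_dominated_convergence (fun ω => Z ω ^ 2)
        (fun n => (hZm.mul (hgm n)).aestronglyMeasurable) hZ2 (fun n => ?_) ?_
      · filter_upwards [hgle, hZnn] with ω h hz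
        rw [Real.norm_eq_abs, abs_mul, abs_of_nonneg hz, sq]
        exact mul_le_mul_of_nonneg_left ((h n).trans (le_abs_self _) |>.trans_eq (abs_of_nonneg hz)) hz
      · filter_upwards [hgtend] with ω h
        simpa [sq] using h.const_mul (Z ω)
    have hbT : Tendsto (fun n => ∫ ω, g n ω ∂P) atTop (𝓝 1) := by
      rw [← hZ1]
      refine tendsto_integral_of_dominated_convergence Z
        (fun n => (hgm n).aestronglyMeasurable) hZint (fun n => ?_) hgtend
      filter_upwards [hgle] with ω h
      exact h n
    have hcT : Tendsto (fun n => ∫ ω, g n ω ^ 2 ∂P) atTop (𝓝 M) := by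
      rw [hM]
      refine tendsto_integral_of_dominated_convergence (fun ω => Z ω ^ 2)
        (fun n => ((hgm n).pow measurable_const).aestronglyMeasurable) hZ2 (fun n => ?_) ?_
      · filter_upwards [hgle, hZnn] with ω h hz
        rw [Real.norm_eq_abs, abs_of_nonneg (sq_nonneg _)]
        have := h n
        nlinarith [abs_nonneg (g n ω), le_abs_self (g n ω), neg_abs_le (g n ω)]
      · filter_upwards [hgtend] with ω h
        exact h.pow 2
    set Xn : ℕ → Ω → ℝ := fun n ω => (1 / θ) * g n ω with hXn
    have hXnb : ∀ n ω, |Xn n ω| ≤ (1 / θ) * n := fun n ω => by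
      simp only [hXn, abs_mul, abs_of_nonneg (le_of_lt (by positivity : (0:ℝ) < 1/θ))]
      exact mul_le_mul_of_nonneg_left (hgb n ω) (by positivity)
    have hXnBb : ∀ n, Xn n ∈ Bb Ω :=
      fun n => ⟨measurable_const.mul (hgm n), ⟨(1 / θ) * n, hXnb n⟩⟩
    have hvn : ∀ n, ((∫ ω, Xn n ω ∂Q) - (∫ ω, Xn n ω ∂P) - θ / 2 * varP P (Xn n)) =
        (1 / θ) * (∫ ω, Z ω * g n ω ∂P) - (1 / θ) * (∫ ω, g n ω ∂P) -
          1 / (2 * θ) * ((∫ ω, g n ω ^ 2 ∂P) - (∫ ω, g n ω ∂P) ^ 2) := by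
      intro n
      have e1 : ∫ ω, Xn n ω ∂Q = (1 / θ) * ∫ ω, Z ω * g n ω ∂P := by
        rw [hintQ]
        rw [show (fun ω => Z ω * Xn n ω) = fun ω => (1 / θ) * (Z ω * g n ω) from
          funext fun ω => by simp only [hXn]; ring, integral_const_mul]
      have e2 : ∫ ω, Xn n ω ∂P = (1 / θ) * ∫ ω, g n ω ∂P := by
        simp only [hXn]; rw [integral_const_mul]
      have hXni : Integrable (Xn n) P := integrable_of_bddMeas P
        (measurable_const.mul (hgm n)) (hXnb n)
      have hXn2 : Integrable (fun ω => Xn n ω ^ 2) P := by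
        refine integrable_of_bddMeas P ((measurable_const.mul (hgm n)).pow measurable_const)
          (c := ((1 / θ) * n) ^ 2) fun ω => ?_
        rw [abs_of_nonneg (sq_nonneg _), ← sq_abs]
        have h1 := hXnb n ω
        have h2 : (0:ℝ) ≤ |Xn n ω| := abs_nonneg _
        nlinarith
      have e3 : varP P (Xn n) = (1 / θ) ^ 2 * ((∫ ω, g n ω ^ 2 ∂P) - (∫ ω, g n ω ∂P) ^ 2) := by
        rw [var_formula P hXni hXn2, e2]
        rw [show (fun ω => Xn n ω ^ 2) = fun ω => (1 / θ) ^ 2 * g n ω ^ 2 from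
          funext fun ω => by simp only [hXn]; ring, integral_const_mul]
        ring
      rw [e1, e2, e3]
      field_simp
    have hvb : ∀ n, (1 / θ) * (∫ ω, Z ω * g n ω ∂P) - (1 / θ) * (∫ ω, g n ω ∂P) -
        1 / (2 * θ) * ((∫ ω, g n ω ^ 2 ∂P) - (∫ ω, g n ω ∂P) ^ 2) ≤ b := fun n =>
      (hvn n) ▸ hb ⟨Xn n, hXnBb n, rfl⟩
    have hT : Tendsto (fun n => (1 / θ) * (∫ ω, Z ω * g n ω ∂P) - (1 / θ) * (∫ ω, g n ω ∂P) -
        1 / (2 * θ) * ((∫ ω, g n ω ^ 2 ∂P) - (∫ ω, g n ω ∂P) ^ 2)) atTop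
        (𝓝 (1 / (2 * θ) * varP P Z)) := by
      have h := ((haT.const_mul (1 / θ)).sub (hbT.const_mul (1 / θ))).sub
        ((hcT.sub (hbT.pow 2)).const_mul (1 / (2 * θ)))
      have heq : (1 / θ) * M - (1 / θ) * 1 - 1 / (2 * θ) * (M - 1 ^ 2) =
          1 / (2 * θ) * varP P Z := by
        rw [hvarZ]; field_simp; ring
      rw [← heq]
      exact h
    exact le_of_tendsto hT (Filter.Eventually.of_forall hvb)
end

section
/- Let ν be a probability measure on the positive integers ℕ₊ = {1, 2, 3, …} (with the power-set σ-algebra) such that ∫ X dν ≤ sup_{n ≥ 1} (1/n)·Σ_{k=1}^{n} X(k) for every bounded function X : ℕ₊ → ℝ. Then the sequence of point masses λ_n := ν({n}) is nonincreasing: λ_{n+1} ≤ λ_n for all n ≥ 1. -/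
open MeasureTheory

noncomputable instance : MeasurableSpace ℕ+ := ⊤

/-- if a probability measure `ν` on `ℕ₊` satisfies
`∫ X dν ≤ sup_n (1/n)·Σ_{k=1}^n X(k)` for every bounded `X`, then its point
masses `λ_n = ν {n}` are nonincreasing. -/
theorem plausible_model_nonincreasing (ν : Measure ℕ+) [IsProbabilityMeasure ν]
    (h : ∀ X : ℕ+ → ℝ, (∃ c : ℝ, ∀ n, |X n| ≤ c) →
      (∫ n, X n ∂ν) ≤ ⨆ n : ℕ+, (1 / (n : ℝ)) * ∑ k ∈ Finset.Icc 1 n, X k) :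
    ∀ n : ℕ+, ν {n + 1} ≤ ν {n} := by
  intro n
  set X : ℕ+ → ℝ := fun k => (if k = n + 1 then (1:ℝ) else 0) - (if k = n then (1:ℝ) else 0)
    with hX
  have hbd : ∃ c : ℝ, ∀ m, |X m| ≤ c := by
    refine ⟨1, fun m => ?_⟩
    simp only [hX]
    split_ifs <;> norm_num
  have key := h X hbd
  -- compute the sup bound
  have hsup : (⨆ m : ℕ+, (1 / (m : ℝ)) * ∑ k ∈ Finset.Icc 1 m, X k) ≤ 0 := by
    apply ciSup_le
    intro m
    have hsum : ∑ k ∈ Finset.Icc 1 m, X k =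
        (if n + 1 ∈ Finset.Icc 1 m then (1:ℝ) else 0) -
        (if n ∈ Finset.Icc 1 m then (1:ℝ) else 0) := by
      rw [hX, Finset.sum_sub_distrib, Finset.sum_ite_eq' _ (n+1) (fun _ => (1:ℝ)),
        Finset.sum_ite_eq' _ n (fun _ => (1:ℝ))]
    rw [hsum]
    have h1 : ∀ k : ℕ+, k ∈ Finset.Icc 1 m ↔ k ≤ m := by
      intro k; simp [Finset.mem_Icc, k.one_le]
    have : ((if n + 1 ∈ Finset.Icc 1 m then (1:ℝ) else 0) -
        (if n ∈ Finset.Icc 1 m then (1:ℝ) else 0)) ≤ 0 := by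
      by_cases hc : n + 1 ≤ m
      · have hc' : n ≤ m := le_trans (le_of_lt (PNat.lt_add_right n 1)) hc
        simp [(h1 (n+1)).2 hc, (h1 n).2 hc']
      · simp only [h1]
        rw [if_neg hc]
        split_ifs <;> norm_num
    have hm : (0:ℝ) ≤ 1 / (m : ℝ) := by positivity
    nlinarith
  -- compute the integral
  have hmeas : ∀ s : Set ℕ+, MeasurableSet s := fun s => trivial
  have hint : (∫ m, X m ∂ν) = (ν {n+1}).toReal - (ν {n}).toReal := by
    have e1 : X = fun m => ({n+1} : Set ℕ+).indicator (fun _ => (1:ℝ)) m -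
        ({n} : Set ℕ+).indicator (fun _ => (1:ℝ)) m := by
      funext m
      simp [hX, Set.indicator_apply]
    rw [hX] at e1
    rw [e1, integral_sub ((integrable_const (1:ℝ)).indicator (hmeas _))
      ((integrable_const (1:ℝ)).indicator (hmeas _)),
      integral_indicator_const _ (hmeas _), integral_indicator_const _ (hmeas _)]
    simp
    rfl
  rw [hint] at key
  have hle : (ν {n+1}).toReal ≤ (ν {n}).toReal := by linarith
  exact (ENNReal.toReal_le_toReal (measure_ne_top ν _) (measure_ne_top ν _)).mp hle
end

section
/- There exists no probability measure ν on the positive integers ℕ₊ = {1, 2, 3, …} (with the power-set σ-algebra) such that both (a) ∫ X dν ≤ sup_{m ≥ 1} (1/m)·Σ_{k=1}^{m} X(k) for every bounded X : ℕ₊ → ℝ, and (b) for every n ≥ 1, 2·∫ X dν − (1/n)·Σ_{k=1}^{n} X(k) ≤ sup_{m ≥ 1} (1/m)·Σ_{k=1}^{m} X(k) for every bounded X : ℕ₊ → ℝ. -/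
open MeasureTheory

/-- the set of plausible models of
`H(X) = sup_m (1/m)·Σ_{k=1}^m X(k)` admits no center of symmetry: there is no
probability measure `ν` with (a) `E_ν ≤ H` and (b) `2E_ν − E_{P_n} ≤ H` for all `n`. -/
theorem no_center_of_symmetry :
    ¬ ∃ ν : Measure ℕ+, IsProbabilityMeasure ν ∧
      (∀ X : ℕ+ → ℝ, (∃ c : ℝ, ∀ n, |X n| ≤ c) →
        (∫ n, X n ∂ν) ≤ ⨆ m : ℕ+, (1 / (m : ℝ)) * ∑ k ∈ Finset.Icc 1 m, X k) ∧
      (∀ n : ℕ+, ∀ X : ℕ+ → ℝ, (∃ c : ℝ, ∀ k, |X k| ≤ c) →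
        2 * (∫ k, X k ∂ν) - (1 / (n : ℝ)) * ∑ k ∈ Finset.Icc 1 n, X k ≤
          ⨆ m : ℕ+, (1 / (m : ℝ)) * ∑ k ∈ Finset.Icc 1 m, X k) := by
  rintro ⟨ν, hprob, ha, hb⟩
  -- the measures of `Iic N` tend to 1, so some `Iic N` has measure > 1/2
  have hmono : Monotone (fun N : ℕ+ => (Set.Iic N : Set ℕ+)) :=
    fun a b hab => Set.Iic_subset_Iic.2 hab
  have hunion : (⋃ N : ℕ+, (Set.Iic N : Set ℕ+)) = Set.univ := by
    ext k
    simp only [Set.mem_iUnion, Set.mem_Iic, Set.mem_univ, iff_true]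
    exact ⟨k, le_refl k⟩
  have htend :
      Filter.Tendsto (fun N : ℕ+ => ν (Set.Iic N)) Filter.atTop (nhds (1 : ENNReal)) := by
    have h := tendsto_measure_iUnion_atTop (μ := ν) hmono
    rw [hunion, measure_univ] at h
    exact h
  obtain ⟨N, hN⟩ := (htend.eventually_const_lt (by norm_num : (1/2 : ENNReal) < 1)).exists
  -- the test function: indicator of {1, ..., N}
  set X : ℕ+ → ℝ := fun k => if k ≤ N then 1 else 0 with hX
  have hbdd : ∃ c : ℝ, ∀ k, |X k| ≤ c :=
    ⟨1, fun k => by by_cases h : k ≤ N <;> simp [hX, h]⟩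
  have hXind : X = (Set.Iic N).indicator (fun _ => (1 : ℝ)) := by
    ext k
    simp [hX, Set.indicator_apply, Set.mem_Iic]
  have hint : ∫ k, X k ∂ν = (ν (Set.Iic N)).toReal := by
    rw [hXind, integral_indicator_const _ MeasurableSpace.measurableSet_top]
    simp
    rfl
  set r : ℝ := (ν (Set.Iic N)).toReal with hr
  have hr2 : (1 / 2 : ℝ) < r := by
    have hfin : ν (Set.Iic N) ≠ ⊤ := measure_ne_top ν _
    have := (ENNReal.toReal_lt_toReal (by norm_num) hfin).2 hN
    simpa using this
  -- bounds on the partial sums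
  have hsum_nonneg : ∀ m : ℕ+, (0 : ℝ) ≤ ∑ k ∈ Finset.Icc 1 m, X k := by
    intro m
    apply Finset.sum_nonneg
    intro k _
    by_cases h : k ≤ N <;> simp [hX, h]
  have hsum_le : ∀ m : ℕ+, ∑ k ∈ Finset.Icc 1 m, X k ≤ (m : ℝ) := by
    intro m
    calc ∑ k ∈ Finset.Icc 1 m, X k ≤ ∑ k ∈ Finset.Icc 1 m, (1 : ℝ) := by
          apply Finset.sum_le_sum
          intro k _
          by_cases h : k ≤ N <;> simp [hX, h]
      _ = (m : ℝ) := by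
          rw [Finset.sum_const, PNat.card_Icc]
          simp
  have hsum_le_N : ∀ m : ℕ+, ∑ k ∈ Finset.Icc 1 m, X k ≤ (N : ℝ) := by
    intro m
    have hcard : ((Finset.Icc 1 m).filter (· ≤ N)).card ≤ (Finset.Icc 1 N).card := by
      apply Finset.card_le_card
      intro k hk
      simp only [Finset.mem_filter, Finset.mem_Icc] at hk ⊢
      exact ⟨hk.1.1, hk.2⟩
    have hb : ∑ k ∈ Finset.Icc 1 m, X k
        = (((Finset.Icc 1 m).filter (· ≤ N)).card : ℝ) := by
      rw [hX]
      simp [Finset.sum_boole]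
    rw [hb]
    have : ((Finset.Icc 1 N).card : ℝ) = (N : ℝ) := by
      rw [PNat.card_Icc]; simp
    rw [← this]
    exact_mod_cast hcard
  -- the sup of the averages is at most 1
  have hsup_le : (⨆ m : ℕ+, (1 / (m : ℝ)) * ∑ k ∈ Finset.Icc 1 m, X k) ≤ 1 := by
    apply ciSup_le
    intro m
    have hm : (0 : ℝ) < (m : ℝ) := by exact_mod_cast m.pos
    rw [one_div, inv_mul_le_iff₀ hm, mul_one]
    exact hsum_le m
  -- pick n large so that N/n < 2r - 1
  have hpos : (0 : ℝ) < 2 * r - 1 := by linarith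
  obtain ⟨n0, hn0⟩ := exists_nat_gt ((N : ℝ) / (2 * r - 1))
  set n : ℕ+ := ⟨n0 + 1, Nat.succ_pos n0⟩ with hn
  have hnR : ((N : ℝ) / (2 * r - 1)) < (n : ℝ) := by
    have hnn : (n : ℕ) = n0 + 1 := rfl
    have : (n0 : ℝ) ≤ (n : ℝ) := by
      rw [show ((n : ℕ+) : ℝ) = (((n : ℕ) : ℕ) : ℝ) from rfl, hnn]
      push_cast
      linarith
    linarith
  have hnpos : (0 : ℝ) < (n : ℝ) := by exact_mod_cast n.pos
  have hNn : (N : ℝ) / (n : ℝ) < 2 * r - 1 := by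
    have h1 : (N : ℝ) < (n : ℝ) * (2 * r - 1) := (div_lt_iff₀ hpos).1 hnR
    rw [div_lt_iff₀ hnpos]
    nlinarith
  -- apply (b) with this n and X
  have hkey := hb n X hbdd
  rw [hint] at hkey
  have havg : (1 / (n : ℝ)) * ∑ k ∈ Finset.Icc 1 n, X k ≤ (N : ℝ) / (n : ℝ) := by
    rw [one_div, div_eq_inv_mul]
    apply mul_le_mul_of_nonneg_left (hsum_le_N n)
    positivity
  have : 2 * r - (N : ℝ) / (n : ℝ) ≤ 1 := le_trans (by linarith) (le_trans hkey hsup_le)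
  linarith
end
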